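/- Let F be a decomposable r-sort species with composition operator Η and Λ-weight w. For each k ≥ 0 define GF_{F_Η^(k)}(z1,...,zr) = Σ_{n1,...,nr ≥ 0} Σ_{x ∈ F_Η^(k)[([n1],...,[nr])]} w(x) · z1^{n1}···zr^{nr}/(n1!···nr!). Then for every k ≥ 0, GF_{F_Η^(k)}(z1,...,zr) = (1/k!)(GF_{F_Η}(z1,...,zr))^k. -/

import Mathlib

open scoped Classical

noncomputable section

/-- Objects of `Set^r`: `r`-tuples of finite sets (realized as finite subsets of `ℕ`). -/
abbrev Obj (r : ℕ) := Fin r → Finset ℕ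

variable {r : ℕ}

/-- The `r`-tuple of empty sets. -/
def oEmpty (r : ℕ) : Obj r := fun _ => ∅

/-- Componentwise union (the disjoint union `⨿` when the arguments are
componentwise disjoint). -/
def oUnion (Ω₁ Ω₂ : Obj r) : Obj r := fun i => Ω₁ i ∪ Ω₂ i

/-- Componentwise intersection. -/
def oInter (Ω₁ Ω₂ : Obj r) : Obj r := fun i => Ω₁ i ∩ Ω₂ i

/-- Componentwise set difference. -/
def oDiff (Ω₁ Ω₂ : Obj r) : Obj r := fun i => Ω₁ i \ Ω₂ i

/-- Componentwise disjointness. -/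
def oDisj (Ω₁ Ω₂ : Obj r) : Prop := ∀ i, Disjoint (Ω₁ i) (Ω₂ i)

/-- Componentwise containment. -/
def oSub (Ω₁ Ω₂ : Obj r) : Prop := ∀ i, Ω₁ i ⊆ Ω₂ i

/-- A morphism of `Set^r`: an `r`-tuple of bijections between the components. -/
def Mor (Ω₁ Ω₂ : Obj r) : Type := ∀ i, {x // x ∈ Ω₁ i} ≃ {x // x ∈ Ω₂ i}

/-- The identity morphism. -/
def idMor (Ω : Obj r) : Mor Ω Ω := fun _ => Equiv.refl _

/-- Composition of morphisms. -/
def compMor {Ω₁ Ω₂ Ω₃ : Obj r} (f : Mor Ω₁ Ω₂) (g : Mor Ω₂ Ω₃) : Mor Ω₁ Ω₃ :=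
  fun i => (f i).trans (g i)

/-- An `r`-sort species: a (covariant) functor from `Set^r` to the category of
finite sets and bijections.  The value `F[Ω]` is the finite set `obj Ω`, and the
action on a morphism `f` is encoded by the function `map f : ℕ → ℕ` (only its
values on `obj Ω₁` are relevant). -/
structure Species (r : ℕ) where
  obj : Obj r → Finset ℕ
  map : ∀ {Ω₁ Ω₂ : Obj r}, Mor Ω₁ Ω₂ → ℕ → ℕ
  map_mem : ∀ {Ω₁ Ω₂ : Obj r} (f : Mor Ω₁ Ω₂), ∀ x ∈ obj Ω₁, map f x ∈ obj Ω₂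
  map_id : ∀ (Ω : Obj r), ∀ x ∈ obj Ω, map (idMor Ω) x = x
  map_comp : ∀ {Ω₁ Ω₂ Ω₃ : Obj r} (f : Mor Ω₁ Ω₂) (g : Mor Ω₂ Ω₃), ∀ x ∈ obj Ω₁,
    map (compMor f g) x = map g (map f x)

/-- The canonical identification of a disjoint union `s ∪ t` with the sum `s ⊕ t`. -/
def finsetSumEquiv {s t : Finset ℕ} (h : Disjoint s t) :
    {x // x ∈ s ∪ t} ≃ {x // x ∈ s} ⊕ {x // x ∈ t} :=
  (Equiv.subtypeEquivRight (fun x => by simp)).trans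
    (Equiv.Set.union (s := (↑s : Set ℕ)) (t := (↑t : Set ℕ)) (by exact_mod_cast h))

/-- The disjoint union of two bijections, as a bijection between unions. -/
def finsetUnionEquiv {s t s' t' : Finset ℕ} (h : Disjoint s t) (h' : Disjoint s' t')
    (f : {x // x ∈ s} ≃ {x // x ∈ s'}) (g : {x // x ∈ t} ≃ {x // x ∈ t'}) :
    {x // x ∈ s ∪ t} ≃ {x // x ∈ s' ∪ t'} :=
  (finsetSumEquiv h).trans ((f.sumCongr g).trans (finsetSumEquiv h').symm)

/-- The disjoint union `f ⨿ g` of two morphisms of `Set^r`. -/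
def morUnion {Ω₁ Ω₂ Ω₁' Ω₂' : Obj r} (h : oDisj Ω₁ Ω₂) (h' : oDisj Ω₁' Ω₂')
    (f : Mor Ω₁ Ω₁') (g : Mor Ω₂ Ω₂') : Mor (oUnion Ω₁ Ω₂) (oUnion Ω₁' Ω₂') :=
  fun i => finsetUnionEquiv (h i) (h' i) (f i) (g i)

/-- A composition operator `Η` for the species `F`: a natural transformation from
`F × F` (on pairs of componentwise disjoint objects) to `F ∘ ⨿` with injective
components, satisfying Axiom (D1). -/
structure CompOp {r : ℕ} (F : Species r) where
  η : Obj r → Obj r → ℕ × ℕ → ℕ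
  mem_η : ∀ {Ω₁ Ω₂ : Obj r}, oDisj Ω₁ Ω₂ → ∀ x ∈ F.obj Ω₁, ∀ y ∈ F.obj Ω₂,
    η Ω₁ Ω₂ (x, y) ∈ F.obj (oUnion Ω₁ Ω₂)
  inj_η : ∀ {Ω₁ Ω₂ : Obj r}, oDisj Ω₁ Ω₂ →
    Set.InjOn (η Ω₁ Ω₂) ((F.obj Ω₁ : Set ℕ) ×ˢ (F.obj Ω₂ : Set ℕ))
  natural : ∀ {Ω₁ Ω₂ Ω₁' Ω₂' : Obj r} (h : oDisj Ω₁ Ω₂) (h' : oDisj Ω₁' Ω₂')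
    (f : Mor Ω₁ Ω₁') (g : Mor Ω₂ Ω₂'), ∀ x ∈ F.obj Ω₁, ∀ y ∈ F.obj Ω₂,
    F.map (morUnion h h' f g) (η Ω₁ Ω₂ (x, y)) = η Ω₁' Ω₂' (F.map f x, F.map g y)
  D1 : ∀ {Ω₁ Ω₂ Ω₃ Ω₄ : Obj r}, oDisj Ω₁ Ω₂ → oDisj Ω₃ Ω₄ →
    oUnion Ω₁ Ω₂ = oUnion Ω₃ Ω₄ →
    η Ω₁ Ω₂ '' ((F.obj Ω₁ : Set ℕ) ×ˢ (F.obj Ω₂ : Set ℕ)) ∩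
      η Ω₃ Ω₄ '' ((F.obj Ω₃ : Set ℕ) ×ˢ (F.obj Ω₄ : Set ℕ)) =
    η Ω₁ Ω₂ ''
      ((η (oInter Ω₁ Ω₃) (oInter Ω₁ Ω₄) ''
          ((F.obj (oInter Ω₁ Ω₃) : Set ℕ) ×ˢ (F.obj (oInter Ω₁ Ω₄) : Set ℕ))) ×ˢ
        (η (oInter Ω₂ Ω₃) (oInter Ω₂ Ω₄) ''
          ((F.obj (oInter Ω₂ Ω₃) : Set ℕ) ×ˢ (F.obj (oInter Ω₂ Ω₄) : Set ℕ))))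

/-- The set `F_Η[Ω]` of indecomposable elements of `F[Ω]`. -/
def indec (F : Species r) (E : CompOp F) (Ω : Obj r) : Set ℕ :=
  if Ω = oEmpty r then ∅
  else (F.obj Ω : Set ℕ) \
    ⋃ (p : Obj r × Obj r) (_ : oDisj p.1 p.2) (_ : p.1 ≠ oEmpty r) (_ : p.2 ≠ oEmpty r)
      (_ : oUnion p.1 p.2 = Ω),
      E.η p.1 p.2 '' ((F.obj p.1 : Set ℕ) ×ˢ (F.obj p.2 : Set ℕ))

/-- The sets `F_Η^(k)[Ω]` of elements of `F[Ω]` consisting of exactly `k`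
indecomposable components. -/
def indecK (F : Species r) (E : CompOp F) : ℕ → Obj r → Set ℕ
  | 0 => fun Ω => if Ω = oEmpty r then (F.obj (oEmpty r) : Set ℕ) else ∅
  | (k + 1) => fun Ω => ⋃ (Ω₁ : Obj r) (_ : oSub Ω₁ Ω),
      E.η Ω₁ (oDiff Ω Ω₁) '' ((indec F E Ω₁) ×ˢ (indecK F E k (oDiff Ω Ω₁)))

/-- `Ω_I`: the componentwise disjoint union of the family `Ωs` over the index set `s`. -/
def bigU {ι : Type} [DecidableEq ι] (Ωs : ι → Obj r) (s : Finset ι) : Obj r :=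
  fun i => s.biUnion (fun j => Ωs j i)

/-- `Brack F E Ωs leaf s B` says that `B` is an `Η`-bracketing of the sets
`leaf (Ωs i)`, `i ∈ s` (each occurring exactly once).  For `leaf Ω = F[Ω]` this is an
`Η`-bracketing of the `F[Ωs i]`; for `leaf = indec F E` it is an `Η`-bracketing of
the `F_Η[Ωs i]`. -/
inductive Brack (F : Species r) (E : CompOp F) {ι : Type} [DecidableEq ι]
    (Ωs : ι → Obj r) (leaf : Obj r → Set ℕ) : Finset ι → Set ℕ → Prop
  | single (i : ι) : Brack F E Ωs leaf {i} (leaf (Ωs i))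
  | node {s t : Finset ι} {B₁ B₂ : Set ℕ} :
      Disjoint s t → s.Nonempty → t.Nonempty →
      Brack F E Ωs leaf s B₁ → Brack F E Ωs leaf t B₂ →
      Brack F E Ωs leaf (s ∪ t) (E.η (bigU Ωs s) (bigU Ωs t) '' (B₁ ×ˢ B₂))

/-- A `Λ`-weight on `(F, Η)`: Axioms (W0), (W1), (W2). -/
structure Weight {r : ℕ} (F : Species r) (E : CompOp F) (Λ : Type) [CommRing Λ]
    [Algebra ℚ Λ] where
  w : Obj r → ℕ → Λ
  W0 : ∀ x ∈ F.obj (oEmpty r), w (oEmpty r) x = 1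
  W1 : ∀ {Ω Ω' : Obj r} (f : Mor Ω Ω'), ∀ x ∈ F.obj Ω, w Ω' (F.map f x) = w Ω x
  W2 : ∀ {Ω₁ Ω₂ : Obj r}, oDisj Ω₁ Ω₂ → ∀ x ∈ indec F E Ω₁, ∀ y ∈ F.obj Ω₂,
    w (oUnion Ω₁ Ω₂) (E.η Ω₁ Ω₂ (x, y)) = w Ω₁ x * w Ω₂ y

/-- The standard object `([n₁], …, [n_r])`, with `[n] = {1, …, n}`. -/
def stdObj {r : ℕ} (n : Fin r → ℕ) : Obj r := fun i => Finset.Icc 1 (n i)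

/-- The exponential generating function
`Σ_{n₁,…,n_r ≥ 0} Σ_{x ∈ S[([n₁],…,[n_r])]} w(x) z₁^{n₁} ⋯ z_r^{n_r}/(n₁! ⋯ n_r!)`
of a subfamily `S` of a species `F`, with respect to a weight `w`. -/
def GF {r : ℕ} {Λ : Type} [CommRing Λ] [Algebra ℚ Λ] (F : Species r)
    (S : Obj r → Set ℕ) (w : Obj r → ℕ → Λ) : MvPowerSeries (Fin r) Λ :=
  fun d => (algebraMap ℚ Λ (∏ i, (1 / (Nat.factorial (d i)) : ℚ))) *
    ∑ x ∈ (F.obj (stdObj fun i => d i)).filter (fun x => x ∈ S (stdObj fun i => d i)),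
      w (stdObj fun i => d i) x

/-- The exponential `exp f = Σ_{k ≥ 0} f^k / k!` of a multivariate formal power
series `f` with zero constant term (the coefficient of a given monomial only
receives contributions from `k` at most the total degree). -/
def mvExp {σ Λ : Type} [CommRing Λ] [Algebra ℚ Λ] (f : MvPowerSeries σ Λ) :
    MvPowerSeries σ Λ :=
  fun d => ∑ k ∈ Finset.range ((d.sum fun _ m => m) + 1),
    algebraMap ℚ Λ ((1 : ℚ) / (Nat.factorial k)) * MvPowerSeries.coeff (R := Λ) d (f ^ k)

/-- The logarithm `log f = Σ_{k ≥ 1} (-1)^{k+1} (f-1)^k / k` of a multivariate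
formal power series `f` with constant term `1`. -/
def mvLog {σ Λ : Type} [CommRing Λ] [Algebra ℚ Λ] (f : MvPowerSeries σ Λ) :
    MvPowerSeries σ Λ :=
  fun d => ∑ k ∈ Finset.Icc 1 (d.sum fun _ m => m),
    algebraMap ℚ Λ ((-1 : ℚ) ^ (k + 1) / k) * MvPowerSeries.coeff (R := Λ) d ((f - 1) ^ k)

/-- The refined generating function `G̃F_F(z₁,…,z_r,y)`, a power series in
`z₁, …, z_r` with coefficients that are polynomials in `y` (recorded via
`Polynomial Λ`, the variable `y` being `Polynomial.X`):
`Σ_{n₁,…,n_r ≥ 0} Σ_k Σ_{x ∈ F_Η^(k)[([n₁],…,[n_r])]} y^k w(x) z₁^{n₁}⋯z_r^{n_r}/(n₁!⋯n_r!)`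
(for fixed `n₁, …, n_r` only the `k ≤ n₁ + ⋯ + n_r` contribute, since
`F_Η^(k)[Ω] = ∅ for k > ‖Ω‖`). -/
def tGF {r : ℕ} {Λ : Type} [CommRing Λ] [Algebra ℚ Λ] (F : Species r) (E : CompOp F)
    (w : Obj r → ℕ → Λ) : MvPowerSeries (Fin r) (Polynomial Λ) :=
  fun d => Polynomial.C (algebraMap ℚ Λ (∏ i, (1 / (Nat.factorial (d i)) : ℚ))) *
    ∑ k ∈ Finset.range ((∑ i, d i) + 1), Polynomial.X ^ k *
      Polynomial.C (∑ x ∈ (F.obj (stdObj fun i => d i)).filter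
          (fun x => x ∈ indecK F E k (stdObj fun i => d i)),
        w (stdObj fun i => d i) x)

/-- The species `E(F_Η)` of sets of `F_Η`-structures:  `E(F_Η)[Ω]` consists of all
finite sets `{(x₁,Ω₁),…,(x_k,Ω_k)}` with `x_i ∈ F_Η[Ω_i]`, the `Ω_i` nonempty and
pairwise componentwise disjoint, and `Ω₁ ⨿ ⋯ ⨿ Ω_k = Ω`. -/
def ESet {r : ℕ} (F : Species r) (E : CompOp F) (Ω : Obj r) :
    Set (Finset (ℕ × Obj r)) :=
  { s | (∀ p ∈ s, p.1 ∈ indec F E p.2 ∧ p.2 ≠ oEmpty r) ∧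
        (∀ p ∈ s, ∀ q ∈ s, p ≠ q → oDisj p.2 q.2) ∧
        (∀ i, Ω i = s.biUnion (fun p => p.2 i)) }

/-- The bijection between a finite set and its image under a map injective on it. -/
def imageEquiv {u : Finset ℕ} (g : ℕ → ℕ) (hg : Set.InjOn g (u : Set ℕ)) :
    {x // x ∈ u} ≃ {x // x ∈ u.image g} :=
  Equiv.ofBijective (fun x => ⟨g x, Finset.mem_image_of_mem g x.2⟩) (by
    constructor
    · rintro ⟨a, ha⟩ ⟨b, hb⟩ hab
      exact Subtype.ext (hg (by exact_mod_cast ha) (by exact_mod_cast hb)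
        (congrArg Subtype.val hab))
    · rintro ⟨y, hy⟩
      rcases Finset.mem_image.mp hy with ⟨a, ha, rfl⟩
      exact ⟨⟨a, ha⟩, rfl⟩)

/-- The underlying function `ℕ → ℕ` of the `i`-th component of a morphism. -/
def apMor {Ω Ω' : Obj r} (f : Mor Ω Ω') (i : Fin r) (a : ℕ) : ℕ :=
  if h : a ∈ Ω i then ((f i) ⟨a, h⟩ : ℕ) else a

/-- The componentwise image of a subobject `O ⊆ Ω` under a morphism `f : Ω → Ω'`. -/
def oImage {Ω Ω' : Obj r} (f : Mor Ω Ω') (O : Obj r) : Obj r :=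
  fun i => (O i).image (apMor f i)

/-- The restriction of a morphism `f : Ω → Ω'` to a subobject `O ⊆ Ω`. -/
def restrictMor {Ω Ω' : Obj r} (f : Mor Ω Ω') {O : Obj r} (hO : oSub O Ω) :
    Mor O (oImage f O) :=
  fun i => imageEquiv (apMor f i) (by
    intro a ha b hb hab
    have ha' : a ∈ Ω i := hO i (by exact_mod_cast ha)
    have hb' : b ∈ Ω i := hO i (by exact_mod_cast hb)
    have h1 : ((f i) ⟨a, ha'⟩ : ℕ) = ((f i) ⟨b, hb'⟩ : ℕ) := by
      simpa [apMor, dif_pos ha', dif_pos hb'] using hab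
    have h2 := (f i).injective (Subtype.ext h1)
    exact congrArg Subtype.val h2)

/-- The induced action of a morphism `f : Ω → Ω'` on `E(F_Η)[Ω]`. -/
def Emap {r : ℕ} (F : Species r) {Ω Ω' : Obj r} (f : Mor Ω Ω')
    (s : Finset (ℕ × Obj r)) : Finset (ℕ × Obj r) :=
  s.image (fun p =>
    if h : oSub p.2 Ω then (F.map (restrictMor f h) p.1, oImage f p.2) else p)

/-! ### Auxiliary machinery -/

section AuxProof

variable {r : ℕ}

/-- The image of `η_{A,B}` on `F[A] × F[B]`, as a set. -/
def img (F : Species r) (E : CompOp F) (A B : Obj r) : Set ℕ :=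
  E.η A B '' ((F.obj A : Set ℕ) ×ˢ (F.obj B : Set ℕ))

lemma mem_img {F : Species r} {E : CompOp F} {A B : Obj r} {x : ℕ} :
    x ∈ img F E A B ↔ ∃ p q, p ∈ F.obj A ∧ q ∈ F.obj B ∧ E.η A B (p, q) = x := by
  constructor
  · rintro ⟨⟨p, q⟩, ⟨hp, hq⟩, rfl⟩
    exact ⟨p, q, by simpa using hp, by simpa using hq, rfl⟩
  · rintro ⟨p, q, hp, hq, rfl⟩
    exact ⟨(p, q), ⟨by simpa using hp, by simpa using hq⟩, rfl⟩

lemma oDisj_diff {Ω Ω₁ : Obj r} : oDisj Ω₁ (oDiff Ω Ω₁) :=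
  fun i => Finset.disjoint_sdiff

lemma oUnion_diff {Ω Ω₁ : Obj r} (h : oSub Ω₁ Ω) : oUnion Ω₁ (oDiff Ω Ω₁) = Ω :=
  funext fun i => Finset.union_sdiff_of_subset (h i)

lemma oSub_union_left {A B : Obj r} : oSub A (oUnion A B) := fun i => Finset.subset_union_left

lemma oSub_union_right {A B : Obj r} : oSub B (oUnion A B) := fun i => Finset.subset_union_right

lemma oUnion_inter_eq {A C D : Obj r} (h : oSub A (oUnion C D)) :
    oUnion (oInter A C) (oInter A D) = A := by
  funext i
  have := h i
  ext a
  simp only [oUnion, oInter, Finset.mem_union, Finset.mem_inter] at *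
  constructor
  · tauto
  · intro ha
    rcases Finset.mem_union.mp (this ha) with h' | h' <;> tauto

lemma oDisj_inter {A B C D : Obj r} (h : oDisj C D) : oDisj (oInter A C) (oInter B D) :=
  fun i => Finset.disjoint_of_subset_left Finset.inter_subset_right
    (Finset.disjoint_of_subset_right Finset.inter_subset_right (h i))

lemma oDisj.symm {A B : Obj r} (h : oDisj A B) : oDisj B A := fun i => (h i).symm

lemma indec_subset {F : Species r} {E : CompOp F} {Ω : Obj r} :
    indec F E Ω ⊆ (F.obj Ω : Set ℕ) := by
  intro x hx
  unfold indec at hx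
  split at hx
  · exact absurd hx (Set.notMem_empty x)
  · exact hx.1

lemma indec_ne_empty {F : Species r} {E : CompOp F} {Ω : Obj r} {x : ℕ}
    (hx : x ∈ indec F E Ω) : Ω ≠ oEmpty r := by
  intro h
  rw [indec, if_pos h] at hx
  exact hx

/-- An element of `indec` is not in the image of any decomposition with nonempty parts. -/
lemma indec_not_decomp {F : Species r} {E : CompOp F} {Ω I J : Obj r} {x : ℕ}
    (hx : x ∈ indec F E Ω) (hIJ : oDisj I J) (hI : I ≠ oEmpty r) (hJ : J ≠ oEmpty r)
    (hU : oUnion I J = Ω) : x ∉ img F E I J := by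
  intro hmem
  rw [indec, if_neg (indec_ne_empty hx)] at hx
  exact hx.2 (Set.mem_iUnion.mpr ⟨(I, J), Set.mem_iUnion.mpr ⟨hIJ, Set.mem_iUnion.mpr ⟨hI,
    Set.mem_iUnion.mpr ⟨hJ, Set.mem_iUnion.mpr ⟨hU, hmem⟩⟩⟩⟩⟩)

/-- Conversely: an element of `F[Ω]`, `Ω ≠ ∅`, avoiding all decompositions is in `indec`. -/
lemma mem_indec_of {F : Species r} {E : CompOp F} {Ω : Obj r} {x : ℕ}
    (hΩ : Ω ≠ oEmpty r) (hx : x ∈ F.obj Ω)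
    (h : ∀ I J, oDisj I J → I ≠ oEmpty r → J ≠ oEmpty r → oUnion I J = Ω → x ∉ img F E I J) :
    x ∈ indec F E Ω := by
  rw [indec, if_neg hΩ]
  refine ⟨hx, ?_⟩
  intro hmem
  simp only [Set.mem_iUnion] at hmem
  obtain ⟨⟨I, J⟩, hIJ, hI, hJ, hU, hm⟩ := hmem
  exact h I J hIJ hI hJ hU hm

lemma mem_eta_obj {F : Species r} {E : CompOp F} {A B Ω : Obj r} {p q : ℕ}
    (hAB : oDisj A B) (hU : oUnion A B = Ω) (hp : p ∈ F.obj A) (hq : q ∈ F.obj B) :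
    E.η A B (p, q) ∈ F.obj Ω := hU ▸ E.mem_η hAB p hp q hq

/-- Pinning components via injectivity. -/
lemma eta_pin {F : Species r} {E : CompOp F} {A B : Obj r} {p q p' q' : ℕ}
    (hAB : oDisj A B) (hp : p ∈ F.obj A) (hq : q ∈ F.obj B) (hp' : p' ∈ F.obj A)
    (hq' : q' ∈ F.obj B) (h : E.η A B (p, q) = E.η A B (p', q')) : p = p' ∧ q = q' := by
  have := E.inj_η hAB (Set.mk_mem_prod (by simpa using hp) (by simpa using hq))
    (Set.mk_mem_prod (by simpa using hp') (by simpa using hq')) h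
  exact ⟨congrArg Prod.fst this, congrArg Prod.snd this⟩

/-- Extraction form of (D1). -/
lemma d1_extract {F : Species r} {E : CompOp F} {A B C D : Obj r} {p q : ℕ}
    (hAB : oDisj A B) (hCD : oDisj C D) (hU : oUnion A B = oUnion C D)
    (hp : p ∈ F.obj A) (hq : q ∈ F.obj B)
    (hmem : E.η A B (p, q) ∈ img F E C D) :
    p ∈ img F E (oInter A C) (oInter A D) ∧ q ∈ img F E (oInter B C) (oInter B D) := by
  have hx : E.η A B (p, q) ∈ img F E A B := mem_img.mpr ⟨p, q, hp, hq, rfl⟩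
  have hD1 := E.D1 hAB hCD hU
  have hboth : E.η A B (p, q) ∈ img F E A B ∩ img F E C D := ⟨hx, hmem⟩
  rw [img, img] at hboth
  rw [hD1] at hboth
  obtain ⟨⟨p', q'⟩, ⟨hp', hq'⟩, heq⟩ := hboth
  simp only [Set.mem_prod] at hp' hq'
  have hA : oUnion (oInter A C) (oInter A D) = A :=
    oUnion_inter_eq (fun i => (hU ▸ oSub_union_left (B := B)) i)
  have hB : oUnion (oInter B C) (oInter B D) = B :=
    oUnion_inter_eq (fun i => (hU ▸ oSub_union_right (A := A)) i)
  have hp'F : p' ∈ F.obj A := by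
    obtain ⟨⟨a, b⟩, ⟨ha, hb⟩, rfl⟩ := hp'
    have := E.mem_η (oDisj_inter hCD) a (by simpa using ha) b (by simpa using hb)
    rwa [hA] at this
  have hq'F : q' ∈ F.obj B := by
    obtain ⟨⟨a, b⟩, ⟨ha, hb⟩, rfl⟩ := hq'
    have := E.mem_η (oDisj_inter hCD) a (by simpa using ha) b (by simpa using hb)
    rwa [hB] at this
  obtain ⟨h1, h2⟩ := eta_pin hAB hp hq hp'F hq'F heq.symm
  exact ⟨h1 ▸ hp', h2 ▸ hq'⟩

/-- Introduction form of (D1). -/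
lemma d1_intro {F : Species r} {E : CompOp F} {A B C D : Obj r} {p q : ℕ}
    (hAB : oDisj A B) (hCD : oDisj C D) (hU : oUnion A B = oUnion C D)
    (hp : p ∈ img F E (oInter A C) (oInter A D)) (hq : q ∈ img F E (oInter B C) (oInter B D)) :
    E.η A B (p, q) ∈ img F E C D := by
  have hD1 := E.D1 hAB hCD hU
  have : E.η A B (p, q) ∈ E.η A B ''
      ((E.η (oInter A C) (oInter A D) ''
          ((F.obj (oInter A C) : Set ℕ) ×ˢ (F.obj (oInter A D) : Set ℕ))) ×ˢ
        (E.η (oInter B C) (oInter B D) ''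
          ((F.obj (oInter B C) : Set ℕ) ×ˢ (F.obj (oInter B D) : Set ℕ)))) :=
    ⟨(p, q), ⟨hp, hq⟩, rfl⟩
  rw [← hD1] at this
  exact this.2

end AuxProof
section AuxProof2

variable {r : ℕ}

lemma oDisj_empty_left {B : Obj r} : oDisj (oEmpty r) B := fun _ => Finset.disjoint_empty_left _

lemma oUnion_empty_left {B : Obj r} : oUnion (oEmpty r) B = B :=
  funext fun i => Finset.empty_union (B i)

lemma oInter_empty_of_disj {A B : Obj r} (h : oDisj A B) : oInter A B = oEmpty r :=
  funext fun i => Finset.disjoint_iff_inter_eq_empty.mp (h i)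

lemma oInter_self {A : Obj r} : oInter A A = A := funext fun i => Finset.inter_self (A i)

lemma exists_disjoint_copy {F : Species r} (Ω : Obj r) :
    ∃ (Ω' : Obj r) (f : Mor Ω Ω'), oDisj Ω Ω' := by
  classical
  set N := (Finset.univ.sup fun i => (Ω i).sup id) + 1 with hN
  refine ⟨fun i => (Ω i).image (· + N), fun i => imageEquiv (· + N) ?_, ?_⟩
  · intro a _ b _ h
    simpa using h
  · intro i
    rw [Finset.disjoint_left]
    intro a ha hmem
    obtain ⟨b, _, rfl⟩ := Finset.mem_image.mp hmem
    have h1 : id (b + N) ≤ (Ω i).sup id := Finset.le_sup ha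
    have h2 : (Ω i).sup id ≤ Finset.univ.sup (fun i => (Ω i).sup id) :=
      Finset.le_sup (f := fun i => (Ω i).sup id) (Finset.mem_univ i)
    simp only [id] at h1
    omega

lemma obj_empty_nonempty {F : Species r} {E : CompOp F}
    (hF : ∃ Ω : Obj r, (F.obj Ω).Nonempty) : (F.obj (oEmpty r)).Nonempty := by
  obtain ⟨Ω, x, hx⟩ := hF
  obtain ⟨Ω', f, hdisj⟩ := exists_disjoint_copy (F := F) Ω
  have hx' : F.map f x ∈ F.obj Ω' := F.map_mem f x hx
  have hz : E.η Ω Ω' (x, F.map f x) ∈ img F E Ω Ω' := mem_img.mpr ⟨_, _, hx, hx', rfl⟩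
  have := (d1_extract hdisj hdisj rfl hx hx' hz).1
  rw [oInter_self, oInter_empty_of_disj hdisj] at this
  obtain ⟨p, q, _, hq, _⟩ := mem_img.mp this
  exact ⟨q, hq⟩

lemma obj_empty_singleton {F : Species r} {E : CompOp F}
    (hF : ∃ Ω : Obj r, (F.obj Ω).Nonempty) : ∃ e, F.obj (oEmpty r) = {e} := by
  classical
  rw [← Finset.card_eq_one]
  set G := F.obj (oEmpty r) with hG
  set T := (G ×ˢ G).image (fun p => E.η (oEmpty r) (oEmpty r) p) with hT
  have hdisj : oDisj (oEmpty r) (oEmpty r) := oDisj_empty_left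
  have hTsub : T ⊆ G := by
    intro z hz
    obtain ⟨⟨p, q⟩, hpq, rfl⟩ := Finset.mem_image.mp hz
    rw [Finset.mem_product] at hpq
    have := E.mem_η hdisj p hpq.1 q hpq.2
    rwa [oUnion_empty_left] at this
  have hcoeT : (T : Set ℕ) = img F E (oEmpty r) (oEmpty r) := by
    rw [hT, Finset.coe_image, Finset.coe_product, img]
  have hD1 := E.D1 (F := F) hdisj hdisj rfl
  rw [oInter_self (A := oEmpty r)] at hD1
  have hSS : img F E (oEmpty r) (oEmpty r) =
      E.η (oEmpty r) (oEmpty r) '' ((img F E (oEmpty r) (oEmpty r)) ×ˢ (img F E (oEmpty r) (oEmpty r))) := by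
    have := hD1
    rw [Set.inter_self] at this
    exact this
  have hinj : Set.InjOn (fun p => E.η (oEmpty r) (oEmpty r) p) ((G : Set ℕ) ×ˢ (G : Set ℕ)) :=
    E.inj_η hdisj
  have hcardT : T.card = G.card * G.card := by
    rw [hT, Finset.card_image_of_injOn (by rw [Finset.coe_product]; exact hinj),
      Finset.card_product]
  have hT2 : T = (T ×ˢ T).image (fun p => E.η (oEmpty r) (oEmpty r) p) := by
    apply Finset.coe_injective
    rw [hcoeT, Finset.coe_image, Finset.coe_product, hcoeT]
    exact hSS
  have hinj2 : Set.InjOn (fun p => E.η (oEmpty r) (oEmpty r) p) ((T : Set ℕ) ×ˢ (T : Set ℕ)) := by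
    apply hinj.mono
    intro p hp
    exact ⟨hTsub hp.1, hTsub hp.2⟩
  have hcardT2 : T.card = T.card * T.card := by
    conv_lhs => rw [hT2]
    rw [Finset.card_image_of_injOn (by rw [Finset.coe_product]; exact hinj2),
      Finset.card_product]
  have hpos : 0 < G.card := Finset.card_pos.mpr (obj_empty_nonempty (E := E) hF)
  have hTpos : 0 < T.card := by rw [hcardT]; exact Nat.mul_pos hpos hpos
  have hT1 : T.card = 1 := by
    have : T.card * 1 = T.card * T.card := by rw [Nat.mul_one, ← hcardT2]
    have := Nat.eq_of_mul_eq_mul_left hTpos this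
    omega
  rw [hcardT] at hT1
  exact Nat.eq_one_of_mul_eq_one_right hT1

/-- The unit maps `η_{∅,D}(e,·)` are bijections; in particular `img F E ∅ D = F[D]`. -/
lemma img_empty_left {F : Species r} {E : CompOp F}
    (hF : ∃ Ω : Obj r, (F.obj Ω).Nonempty) (D : Obj r) :
    img F E (oEmpty r) D = (F.obj D : Set ℕ) := by
  classical
  obtain ⟨e, he⟩ := obj_empty_singleton (E := E) hF
  have hdisj : oDisj (oEmpty r) D := oDisj_empty_left
  set T := ((F.obj (oEmpty r)) ×ˢ (F.obj D)).image (fun p => E.η (oEmpty r) D p) with hT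
  have hTsub : T ⊆ F.obj D := by
    intro z hz
    obtain ⟨⟨p, q⟩, hpq, rfl⟩ := Finset.mem_image.mp hz
    rw [Finset.mem_product] at hpq
    have := E.mem_η hdisj p hpq.1 q hpq.2
    rwa [oUnion_empty_left] at this
  have hcard : T.card = (F.obj D).card := by
    rw [hT, Finset.card_image_of_injOn (by rw [Finset.coe_product]; exact E.inj_η hdisj),
      Finset.card_product, he]
    simp
  have hTeq : T = F.obj D := Finset.eq_of_subset_of_card_le hTsub (le_of_eq hcard.symm)
  rw [img, ← Finset.coe_product, ← Finset.coe_image, ← hT, hTeq]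

end AuxProof2
section AuxProof3

variable {r : ℕ}

/-! #### Object algebra -/

lemma oSub_diff_self {Ω B : Obj r} : oSub (oDiff Ω B) Ω := fun i => Finset.sdiff_subset

lemma oSub_antisymm {A B : Obj r} (h1 : oSub A B) (h2 : oSub B A) : A = B :=
  funext fun i => Finset.Subset.antisymm (h1 i) (h2 i)

lemma oDisj_of_inter_empty {A B : Obj r} (h : oInter A B = oEmpty r) : oDisj A B := by
  intro i
  rw [Finset.disjoint_iff_inter_eq_empty]
  exact congrFun h i

lemma oInter_comm {A B : Obj r} : oInter A B = oInter B A :=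
  funext fun i => Finset.inter_comm (A i) (B i)

lemma oInter_eq_right {C D : Obj r} (h : oSub C D) : oInter D C = C :=
  funext fun i => by
    ext a; simp only [oInter, Finset.mem_inter]
    exact ⟨fun ha => ha.2, fun ha => ⟨h i ha, ha⟩⟩

lemma oInter_diff_diff {Ω B C : Obj r} :
    oInter (oDiff Ω B) (oDiff Ω C) = oDiff (oDiff Ω B) C :=
  funext fun i => by
    ext a; simp only [oInter, oDiff, Finset.mem_inter, Finset.mem_sdiff]; tauto

lemma oInter_sub_diff {C D C₁ : Obj r} (h : oSub C D) :
    oInter C (oDiff D C₁) = oDiff C C₁ :=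
  funext fun i => by
    ext a; simp only [oInter, oDiff, Finset.mem_inter, Finset.mem_sdiff]
    constructor
    · tauto
    · intro ha; exact ⟨ha.1, h i ha.1, ha.2⟩

lemma oDiff_of_union {C₁ C₂ C : Obj r} (hd : oDisj C₁ C₂) (hu : oUnion C₁ C₂ = C) :
    oDiff C C₁ = C₂ := by
  subst hu
  funext i
  ext a
  simp only [oDiff, oUnion, Finset.mem_sdiff, Finset.mem_union]
  have := Finset.disjoint_left.mp (hd i)
  tauto

lemma oDiff_of_disj {A B : Obj r} (h : oDisj A B) : oDiff A B = A :=
  funext fun i => by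
    ext a; simp only [oDiff, Finset.mem_sdiff]
    have := Finset.disjoint_left.mp (h i)
    tauto

lemma oInter_empty_of_sub {Ω C C₁ : Obj r} (h : oSub C₁ C) :
    oInter (oDiff Ω C) C₁ = oEmpty r :=
  funext fun i => by
    ext a; simp only [oInter, oDiff, oEmpty, Finset.mem_inter, Finset.mem_sdiff,
      Finset.notMem_empty, iff_false, not_and]
    intro ha
    exact fun hc => absurd (h i hc) ha.2

lemma oDisj_mono_right {A B C : Obj r} (h : oDisj A B) (hsub : oSub C B) : oDisj A C :=
  fun i => Finset.disjoint_of_subset_right (hsub i) (h i)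

lemma oInter_eq_left_of_disj {Ω B C₁ : Obj r} (hB : oSub B Ω) (h : oDisj B C₁) :
    oInter B (oDiff Ω C₁) = B :=
  funext fun i => by
    ext a; simp only [oInter, oDiff, Finset.mem_inter, Finset.mem_sdiff]
    have := Finset.disjoint_left.mp (h i)
    exact ⟨fun ha => ha.1, fun ha => ⟨ha, hB i ha, this ha⟩⟩

lemma oSub_diff_of {Ω B C : Obj r} (h1 : oSub C Ω) (h2 : oDisj C B) :
    oSub C (oDiff Ω B) := fun i a ha => Finset.mem_sdiff.mpr
  ⟨h1 i ha, Finset.disjoint_left.mp (h2 i) ha⟩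

lemma oSub_trans {A B C : Obj r} (h1 : oSub A B) (h2 : oSub B C) : oSub A C :=
  fun i => (h1 i).trans (h2 i)

lemma ne_oEmpty_iff {A : Obj r} : A ≠ oEmpty r ↔ ∃ i, (A i).Nonempty := by
  constructor
  · intro h
    by_contra hc
    push_neg at hc
    exact h (funext fun i => (hc i))
  · rintro ⟨i, a, ha⟩ h
    rw [h] at ha
    exact absurd ha (Finset.notMem_empty a)

/-! #### Decomposability helpers -/

lemma not_indec_decomp {F : Species r} {E : CompOp F} {Ω : Obj r} {x : ℕ}
    (hx : x ∈ F.obj Ω) (hne : Ω ≠ oEmpty r) (h : x ∉ indec F E Ω) :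
    ∃ I J, oDisj I J ∧ I ≠ oEmpty r ∧ J ≠ oEmpty r ∧ oUnion I J = Ω ∧ x ∈ img F E I J := by
  rw [indec, if_neg hne] at h
  have : x ∈ ⋃ (p : Obj r × Obj r) (_ : oDisj p.1 p.2) (_ : p.1 ≠ oEmpty r)
      (_ : p.2 ≠ oEmpty r) (_ : oUnion p.1 p.2 = Ω),
      E.η p.1 p.2 '' ((F.obj p.1 : Set ℕ) ×ˢ (F.obj p.2 : Set ℕ)) := by
    by_contra hc
    exact h ⟨hx, hc⟩
  simp only [Set.mem_iUnion] at this
  obtain ⟨⟨I, J⟩, h1, h2, h3, h4, h5⟩ := this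
  exact ⟨I, J, h1, h2, h3, h4, h5⟩

lemma indec_inter_cases {F : Species r} {E : CompOp F} {B C D : Obj r} {p : ℕ}
    (hp : p ∈ indec F E B) (hsub : oSub B (oUnion C D)) (hCD : oDisj C D)
    (hmem : p ∈ img F E (oInter B C) (oInter B D)) :
    oInter B C = oEmpty r ∨ oInter B D = oEmpty r := by
  by_contra hc
  push_neg at hc
  exact indec_not_decomp hp (oDisj_inter hCD) hc.1 hc.2 (oUnion_inter_eq hsub) hmem

/-! #### The set of components of an element -/

/-- `Part' F E Ω x`: the set of supports of indecomposable "first components" of `x`. -/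
def Part' (F : Species r) (E : CompOp F) (Ω : Obj r) (x : ℕ) : Set (Obj r) :=
  {B | oSub B Ω ∧ ∃ p ∈ indec F E B, ∃ q ∈ F.obj (oDiff Ω B),
    E.η B (oDiff Ω B) (p, q) = x}

lemma Part'_ne_empty {F : Species r} {E : CompOp F} {Ω B : Obj r} {x : ℕ}
    (h : B ∈ Part' F E Ω x) : B ≠ oEmpty r := by
  obtain ⟨-, p, hp, -⟩ := h
  exact indec_ne_empty hp

lemma Part'_disjoint {F : Species r} {E : CompOp F} {Ω B C : Obj r} {x : ℕ}
    (hB : B ∈ Part' F E Ω x) (hC : C ∈ Part' F E Ω x) (hne : B ≠ C) : oDisj B C := by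
  obtain ⟨hBs, p, hp, q, hq, hx⟩ := hB
  obtain ⟨hCs, p', hp', q', hq', hx'⟩ := hC
  have hU : oUnion B (oDiff Ω B) = oUnion C (oDiff Ω C) := by
    rw [oUnion_diff hBs, oUnion_diff hCs]
  have hUB : oUnion C (oDiff Ω C) = Ω := oUnion_diff hCs
  have hmem : E.η B (oDiff Ω B) (p, q) ∈ img F E C (oDiff Ω C) := by
    rw [hx, ← hx']
    exact mem_img.mpr ⟨p', q', indec_subset hp', hq', rfl⟩
  have hext := d1_extract oDisj_diff oDisj_diff hU (indec_subset hp) hq hmem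
  have hcases := indec_inter_cases hp (by rw [hUB]; exact hBs) oDisj_diff hext.1
  rcases hcases with h1 | h1
  · exact oDisj_of_inter_empty h1
  · -- B ∩ (Ω \ C) = ∅, so B ⊆ C
    have hBC : oSub B C := by
      intro i a ha
      by_contra hac
      have : a ∈ oInter B (oDiff Ω C) i := Finset.mem_inter.mpr
        ⟨ha, Finset.mem_sdiff.mpr ⟨hBs i ha, hac⟩⟩
      rw [h1] at this
      exact absurd this (Finset.notMem_empty a)
    -- symmetric extraction on the C side
    have hmem' : E.η C (oDiff Ω C) (p', q') ∈ img F E B (oDiff Ω B) := by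
      rw [hx', ← hx]
      exact mem_img.mpr ⟨p, q, indec_subset hp, hq, rfl⟩
    have hext' := d1_extract oDisj_diff oDisj_diff hU.symm (indec_subset hp') hq' hmem'
    have hcases' := indec_inter_cases hp' (by rw [oUnion_diff hBs]; exact hCs)
      oDisj_diff hext'.1
    rcases hcases' with h2 | h2
    · -- C ∩ B = ∅ but B ⊆ C and B ≠ ∅
      exfalso
      obtain ⟨i, a, ha⟩ := ne_oEmpty_iff.mp (indec_ne_empty hp)
      have : a ∈ oInter C B i := Finset.mem_inter.mpr ⟨hBC i ha, ha⟩
      rw [h2] at this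
      exact absurd this (Finset.notMem_empty a)
    · -- C ∩ (Ω \ B) = ∅, so C ⊆ B, hence B = C, contradiction
      exfalso
      apply hne
      apply oSub_antisymm hBC
      intro i a ha
      by_contra hac
      have : a ∈ oInter C (oDiff Ω B) i := Finset.mem_inter.mpr
        ⟨ha, Finset.mem_sdiff.mpr ⟨hCs i ha, hac⟩⟩
      rw [h2] at this
      exact absurd this (Finset.notMem_empty a)

end AuxProof3
section AuxProof4

variable {r : ℕ} {F : Species r} {E : CompOp F}

lemma Part'_hered (hF : ∃ Ω : Obj r, (F.obj Ω).Nonempty) {Ω B : Obj r} (hB : oSub B Ω)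
    {p q x : ℕ} (hp : p ∈ indec F E B) (hq : q ∈ F.obj (oDiff Ω B))
    (hx : E.η B (oDiff Ω B) (p, q) = x) {C : Obj r} (hC : C ∈ Part' F E Ω x)
    (hne : C ≠ B) : C ∈ Part' F E (oDiff Ω B) q := by
  have hBmem : B ∈ Part' F E Ω x := ⟨hB, p, hp, q, hq, hx⟩
  have hdisjCB : oDisj C B := Part'_disjoint hC hBmem hne
  obtain ⟨hCs, pb, hpb, qb, hqb, hx'⟩ := hC
  have hCsub : oSub C (oDiff Ω B) := oSub_diff_of hCs hdisjCB
  have hU : oUnion B (oDiff Ω B) = oUnion C (oDiff Ω C) := by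
    rw [oUnion_diff hB, oUnion_diff hCs]
  have hmem : E.η B (oDiff Ω B) (p, q) ∈ img F E C (oDiff Ω C) := by
    rw [hx, ← hx']
    exact mem_img.mpr ⟨pb, qb, indec_subset hpb, hqb, rfl⟩
  have hq2 := (d1_extract oDisj_diff oDisj_diff hU (indec_subset hp) hq hmem).2
  rw [oInter_eq_right hCsub, oInter_diff_diff] at hq2
  obtain ⟨u, v, hu, hv, huv⟩ := mem_img.mp hq2
  refine ⟨hCsub, u, ?_, v, hv, huv⟩
  by_contra hnind
  obtain ⟨C₁, C₂, hd12, h1ne, h2ne, hu12, humem⟩ :=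
    not_indec_decomp hu (indec_ne_empty hpb) hnind
  have hC₁C : oSub C₁ C := by rw [← hu12]; exact oSub_union_left
  have hC₁Ω' : oSub C₁ (oDiff Ω B) := oSub_trans hC₁C hCsub
  have hq3 : q ∈ img F E C₁ (oDiff (oDiff Ω B) C₁) := by
    rw [← huv]
    apply d1_intro oDisj_diff oDisj_diff (by rw [oUnion_diff hCsub, oUnion_diff hC₁Ω'])
    · rw [oInter_eq_right hC₁C, oInter_sub_diff hCsub, oDiff_of_union hd12 hu12]
      exact humem
    · rw [oInter_empty_of_sub hC₁C, oInter_diff_diff,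
        oDiff_of_disj (oDisj_of_inter_empty (oInter_empty_of_sub hC₁C)),
        img_empty_left hF]
      exact hv
  have hC₁Ω : oSub C₁ Ω := oSub_trans hC₁Ω' oSub_diff_self
  have hdisjBC₁ : oDisj B C₁ := oDisj_mono_right hdisjCB.symm hC₁C
  have hx3 : x ∈ img F E C₁ (oDiff Ω C₁) := by
    rw [← hx]
    apply d1_intro oDisj_diff oDisj_diff (by rw [oUnion_diff hB, oUnion_diff hC₁Ω])
    · rw [oInter_empty_of_disj hdisjBC₁, oInter_eq_left_of_disj hB hdisjBC₁,
        img_empty_left hF]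
      exact indec_subset hp
    · rw [oInter_eq_right hC₁Ω', oInter_diff_diff]
      exact hq3
  have hU9 : oUnion C (oDiff Ω C) = oUnion C₁ (oDiff Ω C₁) := by
    rw [oUnion_diff hCs, oUnion_diff hC₁Ω]
  have hext := (d1_extract oDisj_diff oDisj_diff hU9 (indec_subset hpb) hqb
    (by rw [hx']; exact hx3)).1
  rw [oInter_eq_right hC₁C, oInter_sub_diff hCs, oDiff_of_union hd12 hu12] at hext
  exact indec_not_decomp hpb hd12 h1ne h2ne hu12 hext

lemma Part'_exch (hF : ∃ Ω : Obj r, (F.obj Ω).Nonempty) {Ω B : Obj r} (hB : oSub B Ω)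
    {p q x : ℕ} (hp : p ∈ indec F E B) (hq : q ∈ F.obj (oDiff Ω B))
    (hx : E.η B (oDiff Ω B) (p, q) = x) {C : Obj r}
    (hC : C ∈ Part' F E (oDiff Ω B) q) : C ∈ Part' F E Ω x := by
  obtain ⟨hCsub, u, hu, v, hv, huv⟩ := hC
  have hdisjCB : oDisj C B := fun i => Finset.disjoint_of_subset_left (hCsub i)
    (Finset.sdiff_disjoint)
  have hCs : oSub C Ω := oSub_trans hCsub oSub_diff_self
  -- x ∈ img C (Ω \ C)
  have hx1 : x ∈ img F E C (oDiff Ω C) := by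
    rw [← hx]
    apply d1_intro oDisj_diff oDisj_diff (by rw [oUnion_diff hB, oUnion_diff hCs])
    · rw [oInter_empty_of_disj (hdisjCB.symm), oInter_eq_left_of_disj hB hdisjCB.symm,
        img_empty_left hF]
      exact indec_subset hp
    · rw [oInter_eq_right hCsub, oInter_diff_diff]
      exact mem_img.mpr ⟨u, v, indec_subset hu, hv, huv⟩
  obtain ⟨P, Q, hP, hQ, hPQ⟩ := mem_img.mp hx1
  refine ⟨hCs, P, ?_, Q, hQ, hPQ⟩
  by_contra hnind
  obtain ⟨C₁, C₂, hd12, h1ne, h2ne, hu12, hPmem⟩ :=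
    not_indec_decomp hP (indec_ne_empty hu) hnind
  have hC₁C : oSub C₁ C := by rw [← hu12]; exact oSub_union_left
  have hC₁Ω : oSub C₁ Ω := oSub_trans hC₁C hCs
  -- x ∈ img C₁ (Ω \ C₁)
  have hx3 : x ∈ img F E C₁ (oDiff Ω C₁) := by
    rw [← hPQ]
    apply d1_intro oDisj_diff oDisj_diff (by rw [oUnion_diff hCs, oUnion_diff hC₁Ω])
    · rw [oInter_eq_right hC₁C, oInter_sub_diff hCs, oDiff_of_union hd12 hu12]
      exact hPmem
    · rw [oInter_empty_of_sub hC₁C, oInter_diff_diff,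
        oDiff_of_disj (oDisj_of_inter_empty (oInter_empty_of_sub hC₁C)),
        img_empty_left hF]
      exact hQ
  -- extract along (B, Ω\B): q ∈ img C₁ ((Ω\B)\C₁)
  have hC₁Ω' : oSub C₁ (oDiff Ω B) := oSub_trans hC₁C hCsub
  have hU8 : oUnion B (oDiff Ω B) = oUnion C₁ (oDiff Ω C₁) := by
    rw [oUnion_diff hB, oUnion_diff hC₁Ω]
  have hq4 := (d1_extract oDisj_diff oDisj_diff hU8 (indec_subset hp) hq
    (by rw [hx]; exact hx3)).2
  rw [oInter_eq_right hC₁Ω', oInter_diff_diff] at hq4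
  -- extract along (C, (Ω\B)\C): u ∈ img C₁ C₂
  have hU10 : oUnion C (oDiff (oDiff Ω B) C) = oUnion C₁ (oDiff (oDiff Ω B) C₁) := by
    rw [oUnion_diff hCsub, oUnion_diff hC₁Ω']
  have hext := (d1_extract oDisj_diff oDisj_diff hU10 (indec_subset hu) hv
    (by rw [huv]; exact hq4)).1
  rw [oInter_eq_right hC₁C, oInter_sub_diff hCsub, oDiff_of_union hd12 hu12] at hext
  exact indec_not_decomp hu hd12 h1ne h2ne hu12 hext

end AuxProof4
section AuxProof5

variable {r : ℕ} {F : Species r} {E : CompOp F}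

lemma indecK_subset : ∀ (k : ℕ) (Ω : Obj r), indecK F E k Ω ⊆ (F.obj Ω : Set ℕ) := by
  intro k
  induction k with
  | zero =>
    intro Ω x hx
    simp only [indecK] at hx
    split at hx
    · next h => rw [h]; exact hx
    · exact absurd hx (Set.notMem_empty x)
  | succ k ih =>
    intro Ω x hx
    rw [indecK] at hx
    simp only [Set.mem_iUnion] at hx
    obtain ⟨Ω₁, hsub, ⟨p, q⟩, ⟨hp, hq⟩, hx⟩ := hx
    rw [← hx]
    exact mem_eta_obj oDisj_diff (oUnion_diff hsub) (indec_subset hp) (ih _ hq)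

lemma mem_indecK_succ {k : ℕ} {Ω : Obj r} {x : ℕ} :
    x ∈ indecK F E (k + 1) Ω ↔ ∃ Ω₁, oSub Ω₁ Ω ∧ ∃ p ∈ indec F E Ω₁,
      ∃ q ∈ indecK F E k (oDiff Ω Ω₁), E.η Ω₁ (oDiff Ω Ω₁) (p, q) = x := by
  rw [indecK]
  simp only [Set.mem_iUnion]
  constructor
  · rintro ⟨Ω₁, hsub, ⟨p, q⟩, ⟨hp, hq⟩, hx⟩
    exact ⟨Ω₁, hsub, p, hp, q, hq, hx⟩
  · rintro ⟨Ω₁, hsub, p, hp, q, hq, hx⟩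
    exact ⟨Ω₁, hsub, ⟨p, q⟩, ⟨hp, hq⟩, hx⟩

lemma part'_not_self {Ω B C : Obj r} {q : ℕ} (hC : C ∈ Part' F E (oDiff Ω B) q) :
    C ≠ B := by
  intro h
  subst h
  obtain ⟨i, a, ha⟩ := ne_oEmpty_iff.mp (Part'_ne_empty hC)
  exact (Finset.mem_sdiff.mp (hC.1 i ha)).2 ha

/-- Removing a first component from a witnessing finset. -/
lemma erase_step (hF : ∃ Ω : Obj r, (F.obj Ω).Nonempty) {Ω B : Obj r} {x p q : ℕ}
    (hB : oSub B Ω) (hp : p ∈ indec F E B) (hq : q ∈ F.obj (oDiff Ω B))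
    (hx : E.η B (oDiff Ω B) (p, q) = x) {s : Finset (Obj r)}
    (hcoe : ↑s = Part' F E Ω x) (hcover : ∀ i, Ω i = s.sup (fun C => C i)) :
    (↑(s.erase B) : Set (Obj r)) = Part' F E (oDiff Ω B) q ∧
      (∀ i, (oDiff Ω B) i = (s.erase B).sup (fun C => C i)) := by
  have hBmem : B ∈ Part' F E Ω x := ⟨hB, p, hp, q, hq, hx⟩
  constructor
  · ext C
    simp only [Finset.coe_erase, Set.mem_diff, Set.mem_singleton_iff]
    rw [show (C ∈ (↑s : Set (Obj r))) = (C ∈ Part' F E Ω x) by rw [hcoe]]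
    constructor
    · rintro ⟨hCmem, hne⟩
      exact Part'_hered hF hB hp hq hx hCmem hne
    · intro hCmem
      exact ⟨Part'_exch hF hB hp hq hx hCmem, part'_not_self hCmem⟩
  · intro i
    ext a
    simp only [oDiff, Finset.mem_sdiff, Finset.mem_sup]
    constructor
    · rintro ⟨haΩ, haB⟩
      rw [hcover i] at haΩ
      obtain ⟨C, hCs, haC⟩ := Finset.mem_sup.mp haΩ
      refine ⟨C, Finset.mem_erase.mpr ⟨?_, hCs⟩, haC⟩
      intro h
      rw [h] at haC
      exact haB haC
    · rintro ⟨C, hCs, haC⟩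
      obtain ⟨hne, hCs'⟩ := Finset.mem_erase.mp hCs
      have hCmem : C ∈ Part' F E Ω x := by rw [← hcoe]; exact hCs'
      constructor
      · rw [hcover i]
        exact Finset.mem_sup.mpr ⟨C, hCs', haC⟩
      · intro haB
        exact Finset.disjoint_left.mp (Part'_disjoint hCmem hBmem hne i) haC haB

/-- The characterization of `F_Η^(K)[Ω]`. -/
theorem indecK_char (hF : ∃ Ω : Obj r, (F.obj Ω).Nonempty) :
    ∀ (K : ℕ) (Ω : Obj r) (x : ℕ), x ∈ indecK F E K Ω ↔
      (x ∈ F.obj Ω ∧ ∃ s : Finset (Obj r), s.card = K ∧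
        ((↑s : Set (Obj r)) = Part' F E Ω x) ∧ ∀ i, Ω i = s.sup (fun B => B i)) := by
  intro K
  induction K with
  | zero =>
    intro Ω x
    constructor
    · intro hx
      simp only [indecK] at hx
      split at hx
      · next h =>
        subst h
        refine ⟨hx, ∅, rfl, ?_, fun i => rfl⟩
        rw [Finset.coe_empty]
        symm
        rw [Set.eq_empty_iff_forall_notMem]
        intro B hB
        exact Part'_ne_empty hB (funext fun i => Finset.subset_empty.mp (hB.1 i))
      · exact absurd hx (Set.notMem_empty x)
    · rintro ⟨hxF, s, hcard, hcoe, hcover⟩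
      rw [Finset.card_eq_zero] at hcard
      subst hcard
      have hΩ : Ω = oEmpty r := funext fun i => by
        rw [hcover i, Finset.sup_empty]; rfl
      simp only [indecK]
      rw [if_pos hΩ]
      rw [hΩ] at hxF
      exact hxF
  | succ K ih =>
    intro Ω x
    constructor
    · intro hx
      obtain ⟨B, hsub, p, hp, q, hq, hxe⟩ := mem_indecK_succ.mp hx
      obtain ⟨hqF, s', hcard', hcoe', hcover'⟩ := (ih _ q).mp hq
      have hxF : x ∈ F.obj Ω := by
        rw [← hxe]
        exact mem_eta_obj oDisj_diff (oUnion_diff hsub) (indec_subset hp) hqF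
      have hBmem : B ∈ Part' F E Ω x := ⟨hsub, p, hp, q, hqF, hxe⟩
      have hBnot : B ∉ s' := by
        intro h
        have : B ∈ Part' F E (oDiff Ω B) q := by rw [← hcoe']; exact h
        exact part'_not_self this rfl
      refine ⟨hxF, insert B s', by rw [Finset.card_insert_of_notMem hBnot, hcard'], ?_, ?_⟩
      · rw [Finset.coe_insert, hcoe']
        ext C
        simp only [Set.mem_insert_iff]
        constructor
        · rintro (rfl | hC)
          · exact hBmem
          · exact Part'_exch hF hsub hp hqF hxe hC
        · intro hC
          by_cases hne : C = B
          · exact Or.inl hne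
          · exact Or.inr (Part'_hered hF hsub hp hqF hxe hC hne)
      · intro i
        ext a
        rw [Finset.sup_insert, Finset.sup_eq_union, Finset.mem_union]
        constructor
        · intro ha
          by_cases hB : a ∈ B i
          · exact Or.inl hB
          · right
            rw [← hcover' i]
            exact Finset.mem_sdiff.mpr ⟨ha, hB⟩
        · rintro (ha | ha)
          · exact hsub i ha
          · rw [← hcover' i] at ha
            exact (Finset.mem_sdiff.mp ha).1
    · rintro ⟨hxF, s, hcard, hcoe, hcover⟩
      have hne : s.Nonempty := Finset.card_pos.mp (by omega)
      obtain ⟨B, hBs⟩ := hne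
      have hBmem : B ∈ Part' F E Ω x := by rw [← hcoe]; exact hBs
      obtain ⟨hsub, p, hp, q, hq, hxe⟩ := hBmem
      obtain ⟨hcoe2, hcover2⟩ := erase_step hF hsub hp hq hxe hcoe hcover
      have hqK : q ∈ indecK F E K (oDiff Ω B) :=
        (ih _ q).mpr ⟨hq, s.erase B, by rw [Finset.card_erase_of_mem hBs, hcard]; rfl,
          hcoe2, hcover2⟩
      exact mem_indecK_succ.mpr ⟨B, hsub, p, hp, q, hqK, hxe⟩

/-- For `x ∈ F_Η^{(K+1)}[Ω]`, the supports of the valid first components are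
exactly the elements of `Part'`. -/
lemma part'_count (hF : ∃ Ω : Obj r, (F.obj Ω).Nonempty) {K : ℕ} {Ω : Obj r} {x : ℕ}
    (hx : x ∈ indecK F E (K + 1) Ω) {B : Obj r} :
    (B ∈ Part' F E Ω x) ↔ (oSub B Ω ∧ ∃ p ∈ indec F E B,
      ∃ q ∈ indecK F E K (oDiff Ω B), E.η B (oDiff Ω B) (p, q) = x) := by
  constructor
  · rintro hB
    obtain ⟨hsub, p, hp, q, hq, hxe⟩ := hB
    obtain ⟨hxF, s, hcard, hcoe, hcover⟩ := (indecK_char hF (K + 1) Ω x).mp hx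
    have hBs : B ∈ s := by
      rw [← Finset.mem_coe, hcoe]
      exact ⟨hsub, p, hp, q, hq, hxe⟩
    obtain ⟨hcoe2, hcover2⟩ := erase_step hF hsub hp hq hxe hcoe hcover
    have hqK : q ∈ indecK F E K (oDiff Ω B) :=
      (indecK_char hF K _ q).mpr ⟨hq, s.erase B,
        by rw [Finset.card_erase_of_mem hBs, hcard]; rfl, hcoe2, hcover2⟩
    exact ⟨hsub, p, hp, q, hqK, hxe⟩
  · rintro ⟨hsub, p, hp, q, hq, hxe⟩
    exact ⟨hsub, p, hp, q, indecK_subset K _ hq, hxe⟩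

end AuxProof5
section AuxProof6

variable {r : ℕ} {F : Species r} {E : CompOp F}

/-- The inverse of a morphism. -/
def invMor {Ω Ω' : Obj r} (f : Mor Ω Ω') : Mor Ω' Ω := fun i => (f i).symm

lemma map_invMor {Ω Ω' : Obj r} (f : Mor Ω Ω') {x : ℕ} (hx : x ∈ F.obj Ω) :
    F.map (invMor f) (F.map f x) = x := by
  rw [← F.map_comp f (invMor f) x hx]
  have h : compMor f (invMor f) = idMor Ω :=
    funext fun i => Equiv.self_trans_symm (f i)
  rw [h]
  exact F.map_id Ω x hx

lemma invMor_map {Ω Ω' : Obj r} (f : Mor Ω Ω') {x : ℕ} (hx : x ∈ F.obj Ω') :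
    F.map f (F.map (invMor f) x) = x := by
  rw [← F.map_comp (invMor f) f x hx]
  have h : compMor (invMor f) f = idMor Ω' :=
    funext fun i => Equiv.symm_trans_self (f i)
  rw [h]
  exact F.map_id Ω' x hx

lemma apMor_mem {Ω Ω' : Obj r} (f : Mor Ω Ω') {i : Fin r} {a : ℕ} (ha : a ∈ Ω i) :
    apMor f i a ∈ Ω' i := by
  rw [apMor, dif_pos ha]
  exact (f i ⟨a, ha⟩).2

lemma apMor_inj {Ω Ω' : Obj r} (f : Mor Ω Ω') {i : Fin r} {a b : ℕ} (ha : a ∈ Ω i)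
    (hb : b ∈ Ω i) (h : apMor f i a = apMor f i b) : a = b := by
  rw [apMor, dif_pos ha, apMor, dif_pos hb] at h
  exact congrArg Subtype.val ((f i).injective (Subtype.ext h))

lemma apMor_surj {Ω Ω' : Obj r} (f : Mor Ω Ω') {i : Fin r} {b : ℕ} (hb : b ∈ Ω' i) :
    ∃ a, ∃ _ : a ∈ Ω i, apMor f i a = b := by
  refine ⟨((f i).symm ⟨b, hb⟩ : ℕ), ((f i).symm ⟨b, hb⟩).2, ?_⟩
  rw [apMor, dif_pos ((f i).symm ⟨b, hb⟩).2]
  have : (f i) ((f i).symm ⟨b, hb⟩) = ⟨b, hb⟩ := (f i).apply_symm_apply _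
  calc ((f i) ⟨((f i).symm ⟨b, hb⟩ : ℕ), ((f i).symm ⟨b, hb⟩).2⟩ : ℕ)
      = ((f i) ((f i).symm ⟨b, hb⟩) : ℕ) := by congr
    _ = b := by rw [this]

lemma mor_empty {Ω Ω' : Obj r} (f : Mor Ω Ω') (h : Ω = oEmpty r) : Ω' = oEmpty r := by
  subst h
  funext i
  show Ω' i = ∅
  rw [Finset.eq_empty_iff_forall_notMem]
  intro b hb
  obtain ⟨a, ha, -⟩ := apMor_surj f hb
  exact absurd ha (Finset.notMem_empty a)

lemma oImage_sub {Ω Ω' : Obj r} (f : Mor Ω Ω') {B : Obj r} (hB : oSub B Ω) :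
    oSub (oImage f B) Ω' := by
  intro i b hb
  obtain ⟨a, ha, rfl⟩ := Finset.mem_image.mp hb
  exact apMor_mem f (hB i ha)

lemma oImage_ne_empty {Ω Ω' : Obj r} (f : Mor Ω Ω') {B : Obj r} (h : B ≠ oEmpty r) :
    oImage f B ≠ oEmpty r := by
  obtain ⟨i, a, ha⟩ := ne_oEmpty_iff.mp h
  exact ne_oEmpty_iff.mpr ⟨i, apMor f i a, Finset.mem_image_of_mem _ ha⟩

lemma oImage_disj {Ω Ω' : Obj r} (f : Mor Ω Ω') {B C : Obj r} (hB : oSub B Ω)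
    (hC : oSub C Ω) (h : oDisj B C) : oDisj (oImage f B) (oImage f C) := by
  intro i
  rw [Finset.disjoint_left]
  intro b hb hb'
  obtain ⟨a, ha, rfl⟩ := Finset.mem_image.mp hb
  obtain ⟨a', ha', he⟩ := Finset.mem_image.mp hb'
  have := apMor_inj f (hC i ha') (hB i ha) he
  subst this
  exact Finset.disjoint_left.mp (h i) ha ha'

lemma oImage_diff {Ω Ω' : Obj r} (f : Mor Ω Ω') {B : Obj r} (hB : oSub B Ω) :
    oImage f (oDiff Ω B) = oDiff Ω' (oImage f B) := by
  funext i
  ext b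
  simp only [oImage, oDiff, Finset.mem_image, Finset.mem_sdiff]
  constructor
  · rintro ⟨a, ⟨haΩ, haB⟩, rfl⟩
    refine ⟨apMor_mem f haΩ, ?_⟩
    rintro ⟨a', ha', he⟩
    exact haB ((apMor_inj f (hB i ha') haΩ he) ▸ ha')
  · rintro ⟨hb, hnb⟩
    obtain ⟨a, ha, rfl⟩ := apMor_surj f hb
    exact ⟨a, ⟨ha, fun hmem => hnb ⟨a, hmem, rfl⟩⟩, rfl⟩

lemma oImage_full {Ω Ω' : Obj r} (f : Mor Ω Ω') : oImage f Ω = Ω' := by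
  funext i
  ext b
  simp only [oImage, Finset.mem_image]
  constructor
  · rintro ⟨a, ha, rfl⟩
    exact apMor_mem f ha
  · intro hb
    obtain ⟨a, ha, rfl⟩ := apMor_surj f hb
    exact ⟨a, ha, rfl⟩

lemma map_congr' {Ω A A' : Obj r} (hAA' : A = A') (f : Mor Ω A) (g : Mor Ω A')
    (hfg : ∀ i (a : ℕ) (ha : a ∈ Ω i), ((f i ⟨a, ha⟩ : ℕ)) = ((g i ⟨a, ha⟩ : ℕ)))
    {z : ℕ} (_ : z ∈ F.obj Ω) : F.map f z = F.map g z := by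
  subst hAA'
  have : f = g := funext fun i => Equiv.ext fun ⟨a, ha⟩ => Subtype.ext (hfg i a ha)
  rw [this]

lemma finsetSumEquiv_left {s t : Finset ℕ} (h : Disjoint s t) {a : ℕ} (ha : a ∈ s)
    (hat : a ∈ s ∪ t) : finsetSumEquiv h ⟨a, hat⟩ = Sum.inl ⟨a, ha⟩ := by
  rw [finsetSumEquiv, Equiv.trans_apply, Equiv.subtypeEquivRight_apply]
  exact Equiv.Set.union_apply_left _ (by simpa using ha)

lemma finsetSumEquiv_right {s t : Finset ℕ} (h : Disjoint s t) {a : ℕ} (ha : a ∈ t)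
    (hat : a ∈ s ∪ t) : finsetSumEquiv h ⟨a, hat⟩ = Sum.inr ⟨a, ha⟩ := by
  rw [finsetSumEquiv, Equiv.trans_apply, Equiv.subtypeEquivRight_apply]
  exact Equiv.Set.union_apply_right _ (by simpa using ha)

lemma finsetSumEquiv_symm_left {s t : Finset ℕ} (h : Disjoint s t) {a : ℕ} (ha : a ∈ s) :
    (((finsetSumEquiv h).symm (Sum.inl ⟨a, ha⟩) : {x // x ∈ s ∪ t}) : ℕ) = a := by
  have : finsetSumEquiv h ⟨a, Finset.mem_union_left t ha⟩ = Sum.inl ⟨a, ha⟩ :=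
    finsetSumEquiv_left h ha _
  rw [← this, Equiv.symm_apply_apply]

lemma finsetSumEquiv_symm_right {s t : Finset ℕ} (h : Disjoint s t) {a : ℕ} (ha : a ∈ t) :
    (((finsetSumEquiv h).symm (Sum.inr ⟨a, ha⟩) : {x // x ∈ s ∪ t}) : ℕ) = a := by
  have : finsetSumEquiv h ⟨a, Finset.mem_union_right s ha⟩ = Sum.inr ⟨a, ha⟩ :=
    finsetSumEquiv_right h ha _
  rw [← this, Equiv.symm_apply_apply]

lemma finsetUnionEquiv_val_left {s t s' t' : Finset ℕ} (h : Disjoint s t)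
    (h' : Disjoint s' t') (f : {x // x ∈ s} ≃ {x // x ∈ s'})
    (g : {x // x ∈ t} ≃ {x // x ∈ t'}) {a : ℕ} (ha : a ∈ s) (hat : a ∈ s ∪ t) :
    ((finsetUnionEquiv h h' f g ⟨a, hat⟩ : {x // x ∈ s' ∪ t'}) : ℕ) = (f ⟨a, ha⟩ : ℕ) := by
  rw [finsetUnionEquiv, Equiv.trans_apply, Equiv.trans_apply, finsetSumEquiv_left h ha]
  rw [show (f.sumCongr g) (Sum.inl ⟨a, ha⟩) = Sum.inl (f ⟨a, ha⟩) from rfl]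
  exact finsetSumEquiv_symm_left h' (f ⟨a, ha⟩).2

lemma finsetUnionEquiv_val_right {s t s' t' : Finset ℕ} (h : Disjoint s t)
    (h' : Disjoint s' t') (f : {x // x ∈ s} ≃ {x // x ∈ s'})
    (g : {x // x ∈ t} ≃ {x // x ∈ t'}) {a : ℕ} (ha : a ∈ t) (hat : a ∈ s ∪ t) :
    ((finsetUnionEquiv h h' f g ⟨a, hat⟩ : {x // x ∈ s' ∪ t'}) : ℕ) = (g ⟨a, ha⟩ : ℕ) := by
  rw [finsetUnionEquiv, Equiv.trans_apply, Equiv.trans_apply, finsetSumEquiv_right h ha]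
  rw [show (f.sumCongr g) (Sum.inr ⟨a, ha⟩) = Sum.inr (g ⟨a, ha⟩) from rfl]
  exact finsetSumEquiv_symm_right h' (g ⟨a, ha⟩).2

/-- Naturality of `η` along an arbitrary morphism of a decomposed object. -/
lemma map_eta {Ω Ω' : Obj r} (f : Mor Ω Ω') {B C : Obj r} (hBC : oDisj B C)
    (hU : oUnion B C = Ω) {p q : ℕ} (hp : p ∈ F.obj B) (hq : q ∈ F.obj C) :
    F.map f (E.η B C (p, q)) =
      E.η (oImage f B) (oImage f C)
        (F.map (restrictMor f (hU ▸ oSub_union_left)) p,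
         F.map (restrictMor f (hU ▸ oSub_union_right)) q) := by
  subst hU
  have hB : oSub B (oUnion B C) := oSub_union_left
  have hC : oSub C (oUnion B C) := oSub_union_right
  have h' : oDisj (oImage f B) (oImage f C) := oImage_disj f hB hC hBC
  have key := E.natural hBC h' (restrictMor f hB) (restrictMor f hC) p hp q hq
  have hU' : oUnion (oImage f B) (oImage f C) = Ω' := by
    have hfull := oImage_full f
    funext i
    calc (oUnion (oImage f B) (oImage f C)) i
        = (B i).image (apMor f i) ∪ (C i).image (apMor f i) := rfl
      _ = ((B i) ∪ (C i)).image (apMor f i) := (Finset.image_union _ _).symm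
      _ = Ω' i := congrFun hfull i
  rw [← key]
  apply map_congr' hU'.symm f (morUnion hBC h' (restrictMor f hB) (restrictMor f hC))
    ?_ (mem_eta_obj hBC rfl hp hq)
  intro i a ha
  by_cases hmem : a ∈ B i
  · have hval := finsetUnionEquiv_val_left (hBC i) (h' i) (restrictMor f hB i)
      (restrictMor f hC i) hmem (show a ∈ B i ∪ C i from ha)
    calc ((f i) ⟨a, ha⟩ : ℕ) = apMor f i a := by rw [apMor, dif_pos ha]
      _ = ((restrictMor f hB i ⟨a, hmem⟩ : ℕ)) := rfl
      _ = _ := hval.symm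
  · have hmemC : a ∈ C i := by
      rcases Finset.mem_union.mp ha with h1 | h1
      · exact absurd h1 hmem
      · exact h1
    have hval := finsetUnionEquiv_val_right (hBC i) (h' i) (restrictMor f hB i)
      (restrictMor f hC i) hmemC (show a ∈ B i ∪ C i from ha)
    calc ((f i) ⟨a, ha⟩ : ℕ) = apMor f i a := by rw [apMor, dif_pos ha]
      _ = ((restrictMor f hC i ⟨a, hmemC⟩ : ℕ)) := rfl
      _ = _ := hval.symm

end AuxProof6
section AuxProof7

variable {r : ℕ} {F : Species r} {E : CompOp F}

lemma oImage_union_eq {Ω Ω' : Obj r} (f : Mor Ω Ω') {I J : Obj r} (hU : oUnion I J = Ω) :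
    oUnion (oImage f I) (oImage f J) = Ω' := by
  have hfull := oImage_full f
  funext i
  calc (oUnion (oImage f I) (oImage f J)) i
      = (I i).image (apMor f i) ∪ (J i).image (apMor f i) := rfl
    _ = ((I i) ∪ (J i)).image (apMor f i) := (Finset.image_union _ _).symm
    _ = (Ω i).image (apMor f i) := congrArg (Finset.image (apMor f i)) (congrFun hU i)
    _ = Ω' i := congrFun hfull i

lemma map_img {Ω Ω' : Obj r} (f : Mor Ω Ω') {I J : Obj r} (hIJ : oDisj I J)
    (hU : oUnion I J = Ω) {x : ℕ} (hx : x ∈ img F E I J) :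
    F.map f x ∈ img F E (oImage f I) (oImage f J) := by
  obtain ⟨p, q, hp, hq, rfl⟩ := mem_img.mp hx
  rw [map_eta f hIJ hU hp hq]
  exact mem_img.mpr ⟨_, _, F.map_mem _ p hp, F.map_mem _ q hq, rfl⟩

lemma map_indec {Ω Ω' : Obj r} (f : Mor Ω Ω') {x : ℕ} (hx : x ∈ indec F E Ω) :
    F.map f x ∈ indec F E Ω' := by
  have hxF : x ∈ F.obj Ω := indec_subset hx
  apply mem_indec_of
  · intro h
    exact indec_ne_empty hx (mor_empty (invMor f) h)
  · exact F.map_mem f x hxF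
  · intro I J hIJ hI hJ hU hmem
    have hx2 : x ∈ img F E (oImage (invMor f) I) (oImage (invMor f) J) := by
      have := map_img (invMor f) hIJ hU hmem
      rwa [map_invMor f hxF] at this
    exact indec_not_decomp hx
      (oImage_disj (invMor f) (hU ▸ oSub_union_left) (hU ▸ oSub_union_right) hIJ)
      (oImage_ne_empty _ hI) (oImage_ne_empty _ hJ) (oImage_union_eq (invMor f) hU) hx2

lemma map_indecK : ∀ (k : ℕ) {Ω Ω' : Obj r} (f : Mor Ω Ω') {x : ℕ},
    x ∈ indecK F E k Ω → F.map f x ∈ indecK F E k Ω' := by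
  intro k
  induction k with
  | zero =>
    intro Ω Ω' f x hx
    simp only [indecK] at hx ⊢
    split at hx
    · next h =>
      subst h
      rw [if_pos (mor_empty f rfl)]
      have h2 : F.obj Ω' = F.obj (oEmpty r) := by rw [mor_empty f rfl]
      have h3 := F.map_mem f x hx
      rw [h2] at h3
      simpa using h3
    · exact absurd hx (Set.notMem_empty x)
  | succ k ih =>
    intro Ω Ω' f x hx
    obtain ⟨B, hsub, p, hp, q, hq, hxe⟩ := mem_indecK_succ.mp hx
    have heq : F.map f x = E.η (oImage f B) (oImage f (oDiff Ω B))
        (F.map (restrictMor f ((oUnion_diff hsub) ▸ oSub_union_left)) p,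
         F.map (restrictMor f ((oUnion_diff hsub) ▸ oSub_union_right)) q) := by
      rw [← hxe]
      exact map_eta f oDisj_diff (oUnion_diff hsub) (indec_subset hp) (indecK_subset k _ hq)
    obtain ⟨p', q', hp', hq', heq'⟩ : ∃ p' q', p' ∈ indec F E (oImage f B) ∧
        q' ∈ indecK F E k (oImage f (oDiff Ω B)) ∧
        F.map f x = E.η (oImage f B) (oImage f (oDiff Ω B)) (p', q') := by
      refine ⟨_, _, map_indec _ hp, ih _ hq, heq⟩
    rw [oImage_diff f hsub] at hq' heq'
    exact mem_indecK_succ.mpr ⟨oImage f B, oImage_sub f hsub, p', hp', q', hq', heq'.symm⟩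

/-- A morphism between objects with componentwise equal cardinalities. -/
def morOfCards {Ω Ω' : Obj r} (h : ∀ i, (Ω i).card = (Ω' i).card) : Mor Ω Ω' :=
  fun i => Finset.equivOfCardEq (h i)

lemma sum_transport {Λ : Type} [CommRing Λ] [Algebra ℚ Λ] (w : Weight F E Λ)
    (P : Obj r → Set ℕ)
    (hP : ∀ {A A' : Obj r} (g : Mor A A') {x : ℕ}, x ∈ F.obj A → x ∈ P A →
      F.map g x ∈ P A')
    {Ω Ω' : Obj r} (f : Mor Ω Ω') :
    ∑ x ∈ (F.obj Ω).filter (fun x => x ∈ P Ω), w.w Ω x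
      = ∑ x ∈ (F.obj Ω').filter (fun x => x ∈ P Ω'), w.w Ω' x := by
  refine Finset.sum_nbij' (fun x => F.map f x) (fun x => F.map (invMor f) x)
    ?_ ?_ ?_ ?_ ?_
  · intro a ha
    rw [Finset.mem_filter] at *
    exact ⟨F.map_mem f a ha.1, hP f ha.1 ha.2⟩
  · intro a ha
    rw [Finset.mem_filter] at *
    exact ⟨F.map_mem (invMor f) a ha.1, hP (invMor f) ha.1 ha.2⟩
  · intro a ha
    exact map_invMor f (Finset.mem_filter.mp ha).1
  · intro a ha
    exact invMor_map f (Finset.mem_filter.mp ha).1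
  · intro a ha
    exact (w.W1 f a (Finset.mem_filter.mp ha).1).symm

lemma sum_indec_transport {Λ : Type} [CommRing Λ] [Algebra ℚ Λ] (w : Weight F E Λ)
    {Ω Ω' : Obj r} (h : ∀ i, (Ω i).card = (Ω' i).card) :
    ∑ x ∈ (F.obj Ω).filter (fun x => x ∈ indec F E Ω), w.w Ω x
      = ∑ x ∈ (F.obj Ω').filter (fun x => x ∈ indec F E Ω'), w.w Ω' x :=
  sum_transport w (indec F E) (fun g _ _ hx => map_indec g hx) (morOfCards h)

lemma sum_indecK_transport {Λ : Type} [CommRing Λ] [Algebra ℚ Λ] (w : Weight F E Λ)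
    (k : ℕ) {Ω Ω' : Obj r} (h : ∀ i, (Ω i).card = (Ω' i).card) :
    ∑ x ∈ (F.obj Ω).filter (fun x => x ∈ indecK F E k Ω), w.w Ω x
      = ∑ x ∈ (F.obj Ω').filter (fun x => x ∈ indecK F E k Ω'), w.w Ω' x :=
  sum_transport w (indecK F E k) (fun g _ _ hx => map_indecK k g hx) (morOfCards h)

end AuxProof7
section AuxProof8

variable {r : ℕ}

/-- The finset of subobjects of `Ω`. -/
def subsOf (Ω : Obj r) : Finset (Obj r) :=
  Fintype.piFinset (fun i => (Ω i).powerset)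

lemma mem_subsOf {Ω Ω₁ : Obj r} : Ω₁ ∈ subsOf Ω ↔ oSub Ω₁ Ω := by
  simp only [subsOf, Fintype.mem_piFinset, Finset.mem_powerset]
  rfl

variable {F : Species r} {E : CompOp F}

/-- The set of elements of `F[Ω]` built from an indecomposable on `Ω₁` and an
element of `F_Η^(k)` on the complement. -/
def DD (F : Species r) (E : CompOp F) (Ω Ω₁ : Obj r) (k : ℕ) : Finset ℕ :=
  (((F.obj Ω₁).filter (fun p => p ∈ indec F E Ω₁)) ×ˢ
    ((F.obj (oDiff Ω Ω₁)).filter (fun q => q ∈ indecK F E k (oDiff Ω Ω₁)))).image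
    (fun pq => E.η Ω₁ (oDiff Ω Ω₁) pq)

lemma mem_DD {Ω Ω₁ : Obj r} {k x : ℕ} : x ∈ DD F E Ω Ω₁ k ↔
    ∃ p ∈ indec F E Ω₁, ∃ q ∈ indecK F E k (oDiff Ω Ω₁),
      E.η Ω₁ (oDiff Ω Ω₁) (p, q) = x := by
  simp only [DD, Finset.mem_image, Finset.mem_product, Finset.mem_filter, Prod.exists]
  constructor
  · rintro ⟨p, q, ⟨⟨-, hp⟩, -, hq⟩, rfl⟩
    exact ⟨p, hp, q, hq, rfl⟩
  · rintro ⟨p, hp, q, hq, rfl⟩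
    exact ⟨p, q, ⟨⟨indec_subset hp, hp⟩, ⟨indecK_subset k _ hq, hq⟩⟩, rfl⟩

lemma DD_subset {Ω Ω₁ : Obj r} {k : ℕ} (hsub : oSub Ω₁ Ω) :
    DD F E Ω Ω₁ k ⊆ (F.obj Ω).filter (fun x => x ∈ indecK F E (k + 1) Ω) := by
  intro x hx
  obtain ⟨p, hp, q, hq, he⟩ := mem_DD.mp hx
  rw [Finset.mem_filter]
  constructor
  · rw [← he]
    exact mem_eta_obj oDisj_diff (oUnion_diff hsub) (indec_subset hp) (indecK_subset k _ hq)
  · exact mem_indecK_succ.mpr ⟨Ω₁, hsub, p, hp, q, hq, he⟩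

lemma count_first (hF : ∃ Ω : Obj r, (F.obj Ω).Nonempty) {k : ℕ} {Ω : Obj r} {x : ℕ}
    (hx : x ∈ indecK F E (k + 1) Ω) :
    ((subsOf Ω).filter (fun Ω₁ => x ∈ DD F E Ω Ω₁ k)).card = k + 1 := by
  obtain ⟨hxF, s, hcard, hcoe, -⟩ := (indecK_char hF (k + 1) Ω x).mp hx
  have hfe : (subsOf Ω).filter (fun Ω₁ => x ∈ DD F E Ω Ω₁ k) = s := by
    apply Finset.coe_injective
    rw [hcoe]
    ext B
    simp only [Finset.coe_filter, Set.mem_setOf_eq, mem_subsOf]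
    constructor
    · rintro ⟨hsub, hmem⟩
      obtain ⟨p, hp, q, hq, he⟩ := mem_DD.mp hmem
      exact (part'_count hF hx).mpr ⟨hsub, p, hp, q, hq, he⟩
    · intro hB
      obtain ⟨hsub, p, hp, q, hq, he⟩ := (part'_count hF hx).mp hB
      exact ⟨hsub, mem_DD.mpr ⟨p, hp, q, hq, he⟩⟩
  rw [hfe, hcard]

lemma W2' {Λ : Type} [CommRing Λ] [Algebra ℚ Λ] (w : Weight F E Λ) {Ω₁ Ω₂ Ω : Obj r}
    {p q : ℕ} (h : oDisj Ω₁ Ω₂) (hU : oUnion Ω₁ Ω₂ = Ω) (hp : p ∈ indec F E Ω₁)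
    (hq : q ∈ F.obj Ω₂) : w.w Ω (E.η Ω₁ Ω₂ (p, q)) = w.w Ω₁ p * w.w Ω₂ q := by
  subst hU
  exact w.W2 h p hp q hq

/-- The central counting identity. -/
lemma core2 {Λ : Type} [CommRing Λ] [Algebra ℚ Λ] (w : Weight F E Λ)
    (hF : ∃ Ω : Obj r, (F.obj Ω).Nonempty) (k : ℕ) (Ω : Obj r) :
    ∑ Ω₁ ∈ subsOf Ω,
      (∑ p ∈ (F.obj Ω₁).filter (fun p => p ∈ indec F E Ω₁), w.w Ω₁ p) *
      (∑ q ∈ (F.obj (oDiff Ω Ω₁)).filter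
          (fun q => q ∈ indecK F E k (oDiff Ω Ω₁)), w.w (oDiff Ω Ω₁) q)
    = (k + 1) • ∑ x ∈ (F.obj Ω).filter (fun x => x ∈ indecK F E (k + 1) Ω), w.w Ω x := by
  classical
  set T := (F.obj Ω).filter (fun x => x ∈ indecK F E (k + 1) Ω) with hT
  have step1 : ∀ Ω₁ ∈ subsOf Ω,
      (∑ p ∈ (F.obj Ω₁).filter (fun p => p ∈ indec F E Ω₁), w.w Ω₁ p) *
      (∑ q ∈ (F.obj (oDiff Ω Ω₁)).filter
          (fun q => q ∈ indecK F E k (oDiff Ω Ω₁)), w.w (oDiff Ω Ω₁) q)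
      = ∑ x ∈ DD F E Ω Ω₁ k, w.w Ω x := by
    intro Ω₁ hΩ₁
    have hsub : oSub Ω₁ Ω := mem_subsOf.mp hΩ₁
    rw [Finset.sum_mul_sum]
    rw [DD, Finset.sum_image ?hinj]
    case hinj =>
      intro a ha b hb hab
      have hmemF : ∀ c ∈ ((F.obj Ω₁).filter (fun p => p ∈ indec F E Ω₁)) ×ˢ
          ((F.obj (oDiff Ω Ω₁)).filter (fun q => q ∈ indecK F E k (oDiff Ω Ω₁))),
          c ∈ (F.obj Ω₁ : Set ℕ) ×ˢ (F.obj (oDiff Ω Ω₁) : Set ℕ) := by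
        intro c hc
        rw [Finset.mem_product] at hc
        exact ⟨(Finset.mem_filter.mp hc.1).1, (Finset.mem_filter.mp hc.2).1⟩
      exact E.inj_η oDisj_diff (hmemF a ha) (hmemF b hb) hab
    rw [Finset.sum_product]
    apply Finset.sum_congr rfl
    intro p hp
    apply Finset.sum_congr rfl
    intro q hq
    rw [W2' w oDisj_diff (oUnion_diff hsub) (Finset.mem_filter.mp hp).2
      (Finset.mem_filter.mp hq).1]
  rw [Finset.sum_congr rfl step1]
  have step2 : ∀ Ω₁ ∈ subsOf Ω, ∑ x ∈ DD F E Ω Ω₁ k, w.w Ω x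
      = ∑ x ∈ T, if x ∈ DD F E Ω Ω₁ k then w.w Ω x else 0 := by
    intro Ω₁ hΩ₁
    rw [← Finset.sum_filter]
    congr 1
    apply Finset.Subset.antisymm
    · intro x hx
      exact Finset.mem_filter.mpr ⟨DD_subset (mem_subsOf.mp hΩ₁) hx, hx⟩
    · intro x hx
      rw [Finset.mem_filter] at hx
      exact hx.2
  rw [Finset.sum_congr rfl step2, Finset.sum_comm]
  have step3 : ∀ x ∈ T, (∑ Ω₁ ∈ subsOf Ω, if x ∈ DD F E Ω Ω₁ k then w.w Ω x else 0)
      = (k + 1) • w.w Ω x := by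
    intro x hx
    rw [← Finset.sum_filter, Finset.sum_const]
    congr 1
    exact count_first hF (Finset.mem_filter.mp hx).2
  rw [Finset.sum_congr rfl step3, ← Finset.smul_sum]

end AuxProof8
section AuxProof9

variable {r : ℕ} {F : Species r} {E : CompOp F}

lemma factorial_choose_q (a b : ℕ) :
    (1/(a.factorial) : ℚ) * (1/(b.factorial)) = (1/((a+b).factorial)) * ((a+b).choose a) := by
  have h := Nat.choose_mul_factorial_mul_factorial (Nat.le_add_right a b)
  have h1 : (a+b) - a = b := by omega
  rw [h1] at h
  have ha := Nat.factorial_pos a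
  have hb := Nat.factorial_pos b
  have hab := Nat.factorial_pos (a+b)
  field_simp
  push_cast [← h]
  ring

lemma card_stdObj (e : Fin r →₀ ℕ) (i : Fin r) : ((stdObj fun j => e j) i).card = e i := by
  simp [stdObj]

/-- The size-pair map on subobjects. -/
def szPair (Ω : Obj r) (Ω₁ : Obj r) : (Fin r →₀ ℕ) × (Fin r →₀ ℕ) :=
  (Finsupp.equivFunOnFinite.symm (fun i => (Ω₁ i).card),
   Finsupp.equivFunOnFinite.symm (fun i => ((oDiff Ω Ω₁) i).card))

lemma szPair_fst (Ω Ω₁ : Obj r) (i : Fin r) : (szPair Ω Ω₁).1 i = (Ω₁ i).card := by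
  simp [szPair]

lemma szPair_snd (Ω Ω₁ : Obj r) (i : Fin r) : (szPair Ω Ω₁).2 i = (Ω i \ Ω₁ i).card := by
  simp [szPair, oDiff]

lemma szPair_mapsto {Ω Ω₁ : Obj r} {d : Fin r →₀ ℕ} (hcard : ∀ i, (Ω i).card = d i)
    (h : Ω₁ ∈ subsOf Ω) : szPair Ω Ω₁ ∈ Finset.HasAntidiagonal.antidiagonal d := by
  rw [Finset.HasAntidiagonal.mem_antidiagonal]
  apply Finsupp.ext
  intro i
  rw [Finsupp.add_apply, szPair_fst, szPair_snd,
    Finset.card_sdiff_of_subset (mem_subsOf.mp h i), ← hcard i]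
  have := Finset.card_le_card (mem_subsOf.mp h i)
  omega

lemma fiber_eq {Ω : Obj r} {d : Fin r →₀ ℕ} (hcard : ∀ i, (Ω i).card = d i)
    {p : (Fin r →₀ ℕ) × (Fin r →₀ ℕ)} (hp : p ∈ Finset.HasAntidiagonal.antidiagonal d) :
    (subsOf Ω).filter (fun Ω₁ => szPair Ω Ω₁ = p)
      = Fintype.piFinset (fun i => Finset.powersetCard (p.1 i) (Ω i)) := by
  classical
  rw [Finset.HasAntidiagonal.mem_antidiagonal] at hp
  ext Ω₁
  simp only [Finset.mem_filter, Fintype.mem_piFinset, Finset.mem_powersetCard, mem_subsOf]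
  constructor
  · rintro ⟨hsub, hsz⟩
    intro i
    refine ⟨hsub i, ?_⟩
    rw [← szPair_fst Ω Ω₁ i, hsz]
  · intro h
    have hsub : oSub Ω₁ Ω := fun i => (h i).1
    refine ⟨hsub, ?_⟩
    have h2 : (szPair Ω Ω₁).1 = p.1 := Finsupp.ext fun i => by
      rw [szPair_fst]; exact (h i).2
    have h3 : (szPair Ω Ω₁).2 = p.2 := Finsupp.ext fun i => by
      rw [szPair_snd, Finset.card_sdiff_of_subset (hsub i), hcard i, (h i).2]
      have := congrFun (congrArg (fun (f : Fin r →₀ ℕ) => (f : Fin r → ℕ)) hp) i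
      simp only [Finsupp.coe_add, Pi.add_apply] at this
      omega
    exact Prod.ext h2 h3

lemma fiber_card {Ω : Obj r} {d : Fin r →₀ ℕ} (hcard : ∀ i, (Ω i).card = d i)
    {p : (Fin r →₀ ℕ) × (Fin r →₀ ℕ)} (hp : p ∈ Finset.HasAntidiagonal.antidiagonal d) :
    ((subsOf Ω).filter (fun Ω₁ => szPair Ω Ω₁ = p)).card = ∏ i, (d i).choose (p.1 i) := by
  rw [fiber_eq hcard hp, Fintype.card_piFinset]
  apply Finset.prod_congr rfl
  intro i _
  rw [Finset.card_powersetCard, hcard i]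

/-- The coefficient form of the key recursion. -/
lemma coeff_mul_core {Λ : Type} [CommRing Λ] [Algebra ℚ Λ] (w : Weight F E Λ)
    (hF : ∃ Ω : Obj r, (F.obj Ω).Nonempty) (k : ℕ) (d : Fin r →₀ ℕ) :
    MvPowerSeries.coeff (R := Λ) d ((GF F (indec F E) w.w) * (GF F (indecK F E k) w.w))
      = ((k + 1 : ℕ) : Λ) * MvPowerSeries.coeff (R := Λ) d (GF F (indecK F E (k + 1)) w.w) := by
  classical
  rw [MvPowerSeries.coeff_mul]
  have hcard : ∀ i, ((stdObj fun j => d j) i).card = d i := card_stdObj d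
  -- abbreviations
  set Ω : Obj r := stdObj fun j => d j with hΩ
  set U : (Fin r →₀ ℕ) → Λ := fun e =>
    ∑ x ∈ (F.obj (stdObj fun j => e j)).filter
        (fun x => x ∈ indec F E (stdObj fun j => e j)), w.w (stdObj fun j => e j) x with hU
  set V : (Fin r →₀ ℕ) → Λ := fun e =>
    ∑ x ∈ (F.obj (stdObj fun j => e j)).filter
        (fun x => x ∈ indecK F E k (stdObj fun j => e j)), w.w (stdObj fun j => e j) x with hV
  set f : Obj r → Λ := fun Ω₁ =>
    (∑ x ∈ (F.obj Ω₁).filter (fun x => x ∈ indec F E Ω₁), w.w Ω₁ x) *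
    (∑ x ∈ (F.obj (oDiff Ω Ω₁)).filter
        (fun x => x ∈ indecK F E k (oDiff Ω Ω₁)), w.w (oDiff Ω Ω₁) x) with hf
  have step1 : ∀ p ∈ Finset.HasAntidiagonal.antidiagonal d,
      MvPowerSeries.coeff (R := Λ) p.1 (GF F (indec F E) w.w) *
        MvPowerSeries.coeff (R := Λ) p.2 (GF F (indecK F E k) w.w)
      = algebraMap ℚ Λ (∏ i, (1 / ((d i).factorial) : ℚ)) *
          ((∏ i, (d i).choose (p.1 i)) • (U p.1 * V p.2)) := by
    intro p hp
    rw [MvPowerSeries.coeff_apply, MvPowerSeries.coeff_apply]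
    show (algebraMap ℚ Λ (∏ i, (1 / ((p.1 i).factorial) : ℚ)) * U p.1) *
      (algebraMap ℚ Λ (∏ i, (1 / ((p.2 i).factorial) : ℚ)) * V p.2) = _
    have hq : (∏ i, (1 / ((p.1 i).factorial) : ℚ)) * (∏ i, (1 / ((p.2 i).factorial) : ℚ))
        = (∏ i, (1 / ((d i).factorial) : ℚ)) * (∏ i, ((d i).choose (p.1 i) : ℚ)) := by
      rw [← Finset.prod_mul_distrib, ← Finset.prod_mul_distrib]
      apply Finset.prod_congr rfl
      intro i _
      have hpd : p.1 i + p.2 i = d i := by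
        rw [Finset.HasAntidiagonal.mem_antidiagonal] at hp
        have := congrFun (congrArg (fun (f : Fin r →₀ ℕ) => (f : Fin r → ℕ)) hp) i
        simpa using this
      rw [← hpd]
      exact factorial_choose_q _ _
    calc (algebraMap ℚ Λ (∏ i, (1 / ((p.1 i).factorial) : ℚ)) * U p.1) *
        (algebraMap ℚ Λ (∏ i, (1 / ((p.2 i).factorial) : ℚ)) * V p.2)
        = algebraMap ℚ Λ ((∏ i, (1 / ((p.1 i).factorial) : ℚ)) *
            (∏ i, (1 / ((p.2 i).factorial) : ℚ))) * (U p.1 * V p.2) := by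
          rw [map_mul]; ring
      _ = algebraMap ℚ Λ (∏ i, (1 / ((d i).factorial) : ℚ)) *
            (algebraMap ℚ Λ (∏ i, ((d i).choose (p.1 i) : ℚ)) * (U p.1 * V p.2)) := by
          rw [hq, map_mul]; ring
      _ = _ := by
          congr 1
          rw [nsmul_eq_mul]
          congr 1
          rw [← Nat.cast_prod]
          exact map_natCast (algebraMap ℚ Λ) _
  rw [Finset.sum_congr rfl step1, ← Finset.mul_sum]
  have step2 : ∀ p ∈ Finset.HasAntidiagonal.antidiagonal d,
      ((∏ i, (d i).choose (p.1 i)) • (U p.1 * V p.2))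
        = ∑ Ω₁ ∈ (subsOf Ω).filter (fun Ω₁ => szPair Ω Ω₁ = p), f Ω₁ := by
    intro p hp
    have hconst : ∀ Ω₁ ∈ (subsOf Ω).filter (fun Ω₁ => szPair Ω Ω₁ = p),
        f Ω₁ = U p.1 * V p.2 := by
      intro Ω₁ hΩ₁
      rw [Finset.mem_filter] at hΩ₁
      obtain ⟨hs, hsz⟩ := hΩ₁
      have h1 : ∀ i, ((stdObj fun j => p.1 j) i).card = (Ω₁ i).card := by
        intro i
        rw [card_stdObj, ← hsz, szPair_fst]
      have h2 : ∀ i, ((stdObj fun j => p.2 j) i).card = ((oDiff Ω Ω₁) i).card := by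
        intro i
        rw [card_stdObj, ← hsz, szPair_snd]
        rfl
      simp only [hf, hU, hV]
      rw [sum_indec_transport w (fun i => (h1 i).symm),
        sum_indecK_transport w k (fun i => (h2 i).symm)]
    rw [Finset.sum_congr rfl hconst, Finset.sum_const, fiber_card hcard hp]
  rw [Finset.sum_congr rfl step2, Finset.sum_fiberwise_of_maps_to
    (fun Ω₁ h => szPair_mapsto hcard h) f]
  have step3 := core2 w hF k Ω
  simp only [hf]
  rw [step3]
  rw [MvPowerSeries.coeff_apply]
  show _ = ((k + 1 : ℕ) : Λ) * (algebraMap ℚ Λ (∏ i, (1 / ((d i).factorial) : ℚ)) *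
    ∑ x ∈ (F.obj Ω).filter (fun x => x ∈ indecK F E (k+1) Ω), w.w Ω x)
  rw [nsmul_eq_mul]
  ring

end AuxProof9
/-- `GF_{F_Η^(k)} = (1/k!) (GF_{F_Η})^k` for every `k ≥ 0`. -/
theorem stmt17 {r : ℕ} (hr : 0 < r) (F : Species r) (E : CompOp F)
    (hF : ∃ Ω : Obj r, (F.obj Ω).Nonempty)
    (Λ : Type) [CommRing Λ] [Algebra ℚ Λ] (w : Weight F E Λ) (k : ℕ) :
    GF F (indecK F E k) w.w =
      MvPowerSeries.C (σ := Fin r) (R := Λ) (algebraMap ℚ Λ ((1 : ℚ) / (Nat.factorial k))) *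
        (GF F (indec F E) w.w) ^ k := by
  classical
  induction k with
  | zero =>
    obtain ⟨e, he⟩ := obj_empty_singleton (E := E) hF
    apply MvPowerSeries.ext
    intro d
    rw [pow_zero, mul_one, MvPowerSeries.coeff_C]
    rw [MvPowerSeries.coeff_apply]
    by_cases hd : d = 0
    · subst hd
      have hstd : (stdObj fun j => ((0 : Fin r →₀ ℕ)) j) = oEmpty r := funext fun i => by
        simp only [Finsupp.coe_zero, Pi.zero_apply, stdObj, oEmpty]
        exact Finset.Icc_eq_empty (by omega)
      rw [if_pos rfl]
      show algebraMap ℚ Λ (∏ i, (1 / (Nat.factorial (((0 : Fin r →₀ ℕ)) i)) : ℚ)) *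
        (∑ x ∈ (F.obj (stdObj fun j => ((0 : Fin r →₀ ℕ)) j)).filter
          (fun x => x ∈ indecK F E 0 (stdObj fun j => ((0 : Fin r →₀ ℕ)) j)),
          w.w (stdObj fun j => ((0 : Fin r →₀ ℕ)) j) x) = _
      rw [hstd]
      have h1 : ∀ x ∈ F.obj (oEmpty r), x ∈ indecK F E 0 (oEmpty r) := by
        intro x hx
        simp only [indecK, if_pos rfl]
        exact hx
      rw [Finset.filter_true_of_mem h1, he, Finset.sum_singleton,
        w.W0 e (by rw [he]; exact Finset.mem_singleton_self e)]
      simp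
    · rw [if_neg hd]
      obtain ⟨i, hi⟩ : ∃ i, d i ≠ 0 := by
        by_contra hc
        push_neg at hc
        exact hd (Finsupp.ext hc)
      have hstd : (stdObj fun j => d j) ≠ oEmpty r := by
        apply ne_oEmpty_iff.mpr
        exact ⟨i, 1, Finset.mem_Icc.mpr ⟨le_refl 1, Nat.one_le_iff_ne_zero.mpr hi⟩⟩
      have h1 : ∀ x ∈ F.obj (stdObj fun j => d j),
          ¬ (x ∈ indecK F E 0 (stdObj fun j => d j)) := by
        intro x _
        simp only [indecK, if_neg hstd]
        exact Set.notMem_empty x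
      show algebraMap ℚ Λ _ * (∑ x ∈ (F.obj (stdObj fun j => d j)).filter
          (fun x => x ∈ indecK F E 0 (stdObj fun j => d j)), w.w _ x) = (0 : Λ)
      rw [Finset.filter_false_of_mem h1, Finset.sum_empty, mul_zero]
  | succ k ih =>
    apply MvPowerSeries.ext
    intro d
    have hcore := coeff_mul_core w hF k d
    rw [ih] at hcore
    have hAssoc : (GF F (indec F E) w.w) *
        (MvPowerSeries.C (σ := Fin r) (R := Λ) (algebraMap ℚ Λ ((1 : ℚ) / (Nat.factorial k))) *
          (GF F (indec F E) w.w) ^ k)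
        = MvPowerSeries.C (σ := Fin r) (R := Λ) (algebraMap ℚ Λ ((1 : ℚ) / (Nat.factorial k))) *
          (GF F (indec F E) w.w) ^ (k + 1) := by
      ring
    rw [hAssoc, MvPowerSeries.coeff_C_mul] at hcore
    rw [MvPowerSeries.coeff_C_mul]
    have hinv : (algebraMap ℚ Λ (1 / ((k + 1 : ℕ) : ℚ))) * (((k + 1 : ℕ)) : Λ) = 1 := by
      have hne : ((k + 1 : ℕ) : ℚ) ≠ 0 := by positivity
      rw [show (((k + 1 : ℕ)) : Λ) = algebraMap ℚ Λ (((k + 1 : ℕ) : ℚ)) from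
        (map_natCast _ _).symm, ← map_mul, one_div, inv_mul_cancel₀ hne, map_one]
    calc MvPowerSeries.coeff (R := Λ) d (GF F (indecK F E (k + 1)) w.w)
        = (algebraMap ℚ Λ (1 / ((k + 1 : ℕ) : ℚ))) * ((((k + 1 : ℕ)) : Λ) *
            MvPowerSeries.coeff (R := Λ) d (GF F (indecK F E (k + 1)) w.w)) := by
          rw [← mul_assoc, hinv, one_mul]
      _ = (algebraMap ℚ Λ (1 / ((k + 1 : ℕ) : ℚ))) *
            ((algebraMap ℚ Λ ((1 : ℚ) / (Nat.factorial k))) *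
              MvPowerSeries.coeff (R := Λ) d ((GF F (indec F E) w.w) ^ (k + 1))) := by
          rw [← hcore]
      _ = algebraMap ℚ Λ ((1 : ℚ) / (Nat.factorial (k + 1))) *
            MvPowerSeries.coeff (R := Λ) d ((GF F (indec F E) w.w) ^ (k + 1)) := by
          rw [← mul_assoc, ← map_mul]
          congr 2
          rw [Nat.factorial_succ]
          push_cast
          rw [one_div, one_div, one_div, ← mul_inv]

end
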